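/- arXiv:1212.0876 — 9 statements merged into one kernel-verified Lean document; each statement's English description precedes it below -/
import Mathlib

section
/- Let N ≥ 1, let S be an N×N real symmetric positive definite matrix, set V(x) = (1/2)·xᵀSx for x ∈ ℝ^N, and let b(x) = −Ax for an N×N real matrix A. Then the vector field x ↦ b(x)·e^{−V(x)} has identically vanishing divergence on ℝ^N (i.e. ∑_{i=1}^N ∂_{x_i}((−Ax)_i · e^{−V(x)}) = 0 for every x ∈ ℝ^N) if and only if A = J·S for some N×N real antisymmetric matrix J (Jᵀ = −J). -/
open Matrix

private lemma quad_zero {N : ℕ} (M : Matrix (Fin N) (Fin N) ℝ)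
    (h : ∀ x : Fin N → ℝ, x ⬝ᵥ M *ᵥ x = 0) : Mᵀ = -M := by
  have key : ∀ u v : Fin N → ℝ, u ⬝ᵥ M *ᵥ v + v ⬝ᵥ M *ᵥ u = 0 := by
    intro u v
    have h1 := h (u + v); have h2 := h u; have h3 := h v
    rw [Matrix.mulVec_add, dotProduct_add, add_dotProduct, add_dotProduct] at h1
    linarith
  ext i j
  have := key (Pi.single j 1) (Pi.single i 1)
  simp [Matrix.mulVec_single, dotProduct, Pi.single_apply] at this
  simp [Matrix.transpose_apply]
  linarith

private lemma skew_quad {N : ℕ} (M : Matrix (Fin N) (Fin N) ℝ) (hM : Mᵀ = -M)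
    (x : Fin N → ℝ) : x ⬝ᵥ M *ᵥ x = 0 := by
  have h1 : x ⬝ᵥ M *ᵥ x = (Mᵀ *ᵥ x) ⬝ᵥ x := by
    rw [Matrix.dotProduct_mulVec]
    congr 1
    rw [← Matrix.vecMul_transpose, Matrix.transpose_transpose]
  rw [hM] at h1
  have h2 : ((-M) *ᵥ x) ⬝ᵥ x = -(x ⬝ᵥ M *ᵥ x) := by
    rw [Matrix.neg_mulVec, neg_dotProduct, dotProduct_comm]
  rw [h2] at h1
  linarith

private lemma fderiv_eval {N : ℕ} (S A : Matrix (Fin N) (Fin N) ℝ)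
    (hSsymm : Sᵀ = S) (x : Fin N → ℝ) (i : Fin N) :
    fderiv ℝ (fun y : Fin N → ℝ =>
        (-(A *ᵥ y)) i * Real.exp (-(1 / 2 * (y ⬝ᵥ (S *ᵥ y))))) x (Pi.single i 1)
      = Real.exp (-(1 / 2 * (x ⬝ᵥ (S *ᵥ x)))) * ((A *ᵥ x) i * (S *ᵥ x) i - A i i) := by
  set MS : (Fin N → ℝ) →L[ℝ] (Fin N → ℝ) :=
    LinearMap.toContinuousLinearMap (Matrix.mulVecLin S) with hMS
  set MA : (Fin N → ℝ) →L[ℝ] (Fin N → ℝ) :=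
    LinearMap.toContinuousLinearMap (Matrix.mulVecLin A) with hMA
  set G : (Fin N → ℝ) →L[ℝ] ℝ := -((ContinuousLinearMap.proj i).comp MA) with hG
  have hg : HasFDerivAt (fun y : Fin N → ℝ => (-(A *ᵥ y)) i) G x := by
    have hfun : (fun y : Fin N → ℝ => (-(A *ᵥ y)) i) = ⇑G := by
      funext y; simp [hG, hMA, Matrix.mulVecLin]
    rw [hfun]; exact G.hasFDerivAt
  set Q : (Fin N → ℝ) →L[ℝ] ℝ :=
    ∑ j : Fin N, ((x j) • ((ContinuousLinearMap.proj j).comp MS)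
      + ((S *ᵥ x) j) • (ContinuousLinearMap.proj j : (Fin N → ℝ) →L[ℝ] ℝ)) with hQ
  have hq : HasFDerivAt (fun y : Fin N → ℝ => y ⬝ᵥ S *ᵥ y) Q x := by
    have hfun : (fun y : Fin N → ℝ => y ⬝ᵥ S *ᵥ y)
        = fun y => ∑ j : Fin N, (y j) * (S *ᵥ y) j := rfl
    rw [hfun, hQ]
    apply HasFDerivAt.fun_sum
    intro j _
    exact (ContinuousLinearMap.proj j).hasFDerivAt.mul
      ((ContinuousLinearMap.proj j).comp MS).hasFDerivAt
  have hh : HasFDerivAt (fun y : Fin N → ℝ => -(1 / 2 * (y ⬝ᵥ S *ᵥ y)))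
      (-((1 / 2 : ℝ) • Q)) x := (hq.const_mul (1 / 2 : ℝ)).neg
  have hexp := hh.exp
  have htot := hg.fun_mul hexp
  rw [htot.fderiv]
  have hGval : G (Pi.single i 1) = -(A i i) := by
    simp [hG, hMA, Matrix.mulVecLin, Matrix.mulVec_single]
  have hQval : Q (Pi.single i 1) = 2 * (S *ᵥ x) i := by
    simp only [hQ, ContinuousLinearMap.sum_apply, ContinuousLinearMap.add_apply,
      ContinuousLinearMap.smul_apply, ContinuousLinearMap.comp_apply,
      ContinuousLinearMap.proj_apply, hMS, LinearMap.coe_toContinuousLinearMap',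
      Matrix.mulVecLin_apply, Matrix.mulVec_single]
    rw [Finset.sum_add_distrib]
    have e1 : ∑ j : Fin N, x j • (S j i * 1) = (S *ᵥ x) i := by
      rw [← congrFun (congrFun (congrArg Matrix.mulVec hSsymm) x) i]
      simp [Matrix.mulVec, dotProduct, Matrix.transpose_apply, mul_comm]
    have e2 : ∑ j : Fin N, (S *ᵥ x) j • Pi.single i (1:ℝ) j = (S *ᵥ x) i := by
      simp [Pi.single_apply]
    have e0 : ∑ j : Fin N, x j • (MulOpposite.op (1:ℝ) • S.col i) j
        = ∑ j : Fin N, x j • (S j i * 1) := by simp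
    rw [e0, e1, e2]; ring
  simp only [ContinuousLinearMap.add_apply, ContinuousLinearMap.smul_apply,
    ContinuousLinearMap.neg_apply, hGval, hQval]
  simp only [smul_eq_mul, Pi.neg_apply]
  ring


/-- For a quadratic potential `V(x) = ½ xᵀSx` with `S` symmetric positive
definite, the vector field `x ↦ (-Ax)·e^{-V(x)}` is divergence free on `ℝ^N` if and only
if `A = J S` for some antisymmetric matrix `J`. -/
theorem divergence_free_iff_antisymm
    (N : ℕ) (hN : 1 ≤ N) (S : Matrix (Fin N) (Fin N) ℝ) (hS : S.PosDef)
    (A : Matrix (Fin N) (Fin N) ℝ) :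
    (∀ x : Fin N → ℝ,
        ∑ i : Fin N,
          fderiv ℝ
            (fun y : Fin N → ℝ =>
              (-(A *ᵥ y)) i * Real.exp (-(1 / 2 * (y ⬝ᵥ (S *ᵥ y))))) x (Pi.single i 1) = 0)
      ↔ ∃ J : Matrix (Fin N) (Fin N) ℝ, Jᵀ = -J ∧ A = J * S := by
  have hSsymm : Sᵀ = S := hS.isHermitian.eq
  have hq_eq : ∀ x : Fin N → ℝ, (A *ᵥ x) ⬝ᵥ (S *ᵥ x) = x ⬝ᵥ (Aᵀ * S) *ᵥ x := by
    intro x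
    rw [← Matrix.mulVec_mulVec]
    rw [Matrix.dotProduct_mulVec x Aᵀ (S *ᵥ x), Matrix.vecMul_transpose]
  have key : ∀ x : Fin N → ℝ,
      (∑ i : Fin N,
        fderiv ℝ (fun y : Fin N → ℝ =>
          (-(A *ᵥ y)) i * Real.exp (-(1 / 2 * (y ⬝ᵥ (S *ᵥ y))))) x (Pi.single i 1))
      = Real.exp (-(1 / 2 * (x ⬝ᵥ (S *ᵥ x)))) * (x ⬝ᵥ (Aᵀ * S) *ᵥ x - A.trace) := by
    intro x
    have : ∀ i : Fin N,
        fderiv ℝ (fun y : Fin N → ℝ =>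
          (-(A *ᵥ y)) i * Real.exp (-(1 / 2 * (y ⬝ᵥ (S *ᵥ y))))) x (Pi.single i 1)
        = Real.exp (-(1 / 2 * (x ⬝ᵥ (S *ᵥ x)))) * ((A *ᵥ x) i * (S *ᵥ x) i - A i i) :=
      fun i => fderiv_eval S A hSsymm x i
    rw [Finset.sum_congr rfl (fun i _ => this i), ← Finset.mul_sum]
    congr 1
    rw [Finset.sum_sub_distrib]
    rw [← hq_eq x]
    rfl
  constructor
  · intro h
    have hq0 : ∀ x : Fin N → ℝ, x ⬝ᵥ (Aᵀ * S) *ᵥ x = A.trace := by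
      intro x
      have := h x
      rw [key x] at this
      have hexp := Real.exp_pos (-(1 / 2 * (x ⬝ᵥ (S *ᵥ x))))
      have := mul_eq_zero.mp this
      rcases this with h1 | h1
      · exact absurd h1 hexp.ne'
      · linarith
    have htr : A.trace = 0 := by
      have := hq0 0
      simpa using this.symm
    have hq0' : ∀ x : Fin N → ℝ, x ⬝ᵥ (Aᵀ * S) *ᵥ x = 0 := fun x => htr ▸ hq0 x
    have hskew : (Aᵀ * S)ᵀ = -(Aᵀ * S) := quad_zero _ hq0'
    rw [Matrix.transpose_mul, Matrix.transpose_transpose, hSsymm] at hskew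
    -- hskew : S * A = -(Aᵀ * S)
    have hdet : IsUnit S.det := isUnit_iff_ne_zero.mpr hS.det_pos.ne'
    refine ⟨A * S⁻¹, ?_, ?_⟩
    · rw [Matrix.transpose_mul, Matrix.transpose_nonsing_inv, hSsymm]
      have : Aᵀ * S = -(S * A) := by
        rw [hskew, neg_neg]
      have h2 : S⁻¹ * Aᵀ = S⁻¹ * (Aᵀ * S) * S⁻¹ := by
        rw [mul_assoc (S⁻¹) (Aᵀ * S) S⁻¹, mul_assoc Aᵀ S S⁻¹,
          Matrix.mul_nonsing_inv _ hdet, mul_one]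
      rw [h2, this]
      rw [Matrix.mul_neg, Matrix.neg_mul, ← mul_assoc, Matrix.nonsing_inv_mul _ hdet, one_mul]
    · rw [mul_assoc, Matrix.nonsing_inv_mul _ hdet, mul_one]
  · rintro ⟨J, hJ, rfl⟩
    intro x
    rw [key x]
    have htr : (J * S).trace = 0 := by
      have h1 : (J * S).trace = ((J * S)ᵀ).trace := (Matrix.trace_transpose _).symm
      rw [Matrix.transpose_mul, hSsymm, hJ, Matrix.mul_neg, Matrix.trace_neg,
        Matrix.trace_mul_comm S J] at h1
      linarith
    have hskew : ((J * S)ᵀ * S)ᵀ = -((J * S)ᵀ * S) := by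
      rw [Matrix.transpose_mul, hSsymm, Matrix.transpose_transpose,
        Matrix.transpose_mul, hSsymm, hJ]
      simp [Matrix.mul_neg, Matrix.neg_mul, mul_assoc]
    rw [htr, skew_quad _ hskew x]
    ring
end

section
/- Let S be an N×N real symmetric positive definite matrix. Then: (a) for every N×N real antisymmetric matrix J, the matrix B_J = (I+J)S has at least one eigenvalue λ ∈ ℂ with Re(λ) ≤ Tr(S)/N; and (b) there exists an N×N real antisymmetric matrix J such that every eigenvalue λ ∈ ℂ of (I+J)S satisfies Re(λ) = Tr(S)/N. Consequently, the maximum over antisymmetric J of min{Re(λ) : λ an eigenvalue of (I+J)S} equals Tr(S)/N and is attained. -/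
open Matrix

section Aux

open Polynomial Finset

private lemma mem_spectrum_iff_isRoot' {n : Type*} [Fintype n] [DecidableEq n]
    (M : Matrix n n ℂ) (μ : ℂ) : μ ∈ spectrum ℂ M ↔ M.charpoly.IsRoot μ := by
  rw [spectrum.mem_iff, Matrix.isUnit_iff_isUnit_det, isUnit_iff_ne_zero, not_not,
      Polynomial.IsRoot]
  have h : (algebraMap ℂ (Matrix n n ℂ) μ - M).det = M.charpoly.eval μ := by
    rw [Matrix.charpoly, ← Polynomial.coe_evalRingHom, RingHom.map_det]
    congr 1
    ext i j
    by_cases h : i = j <;>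
      simp [h, Matrix.algebraMap_matrix_apply, RingHom.mapMatrix_apply]
  rw [h]

private lemma charpoly_conj' {n : Type*} [Fintype n] [DecidableEq n] {R : Type*} [CommRing R]
    (P Q M : Matrix n n R) (h1 : P * Q = 1) (h2 : Q * P = 1) :
    (P * M * Q).charpoly = M.charpoly := by
  have hPQ : P.map (C : R →+* R[X]) * Q.map C = 1 := by
    rw [← Matrix.map_mul]; rw [h1]; simp
  have key : charmatrix (P * M * Q)
      = P.map Polynomial.C * charmatrix M * Q.map Polynomial.C := by
    show Matrix.scalar n (X : R[X]) - (C : R →+* R[X]).mapMatrix (P * M * Q) = _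
    have hc : P.map (C : R →+* R[X]) * Matrix.scalar n X
        = Matrix.scalar n X * P.map C :=
      (Matrix.scalar_commute (X : R[X]) (fun r => Commute.all _ _) _).symm
    simp only [RingHom.mapMatrix_apply, Matrix.map_mul, charmatrix,
      Matrix.mul_sub, Matrix.sub_mul]
    rw [hc, Matrix.mul_assoc (Matrix.scalar n X), hPQ, Matrix.mul_one]
  rw [Matrix.charpoly, key, Matrix.det_mul, Matrix.det_mul, Matrix.charpoly]
  have hd : (P.map (C : R →+* R[X])).det * (Q.map C).det = 1 := by
    rw [← Matrix.det_mul, hPQ, Matrix.det_one]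
  calc (P.map (C : R →+* R[X])).det * (charmatrix M).det * (Q.map C).det
      = (charmatrix M).det * ((P.map (C : R →+* R[X])).det * (Q.map C).det) := by ring
    _ = (charmatrix M).det := by rw [hd, mul_one]

private lemma exists_unit_vec_quad' {n : ℕ} (hn : 0 < n) (S : Matrix (Fin n) (Fin n) ℝ)
    (hsym : Sᵀ = S) (c : ℝ) (hc : S.trace = n * c) :
    ∃ v : Fin n → ℝ, (∑ k, v k * v k) = 1 ∧ v ⬝ᵥ (S *ᵥ v) = c := by
  haveI : Nonempty (Fin n) := ⟨⟨0, hn⟩⟩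
  have hcard : ((Finset.univ : Finset (Fin n)).card : ℝ) = n := by simp
  have ht : S.trace = ∑ j, S j j := rfl
  obtain ⟨i, hi⟩ : ∃ i, S i i ≤ c := by
    by_contra hcon
    push_neg at hcon
    have := Finset.sum_lt_sum_of_nonempty (Finset.univ_nonempty) (fun j _ => hcon j)
    rw [Finset.sum_const, nsmul_eq_mul, hcard] at this
    rw [ht] at hc; linarith
  obtain ⟨j, hj⟩ : ∃ j, c ≤ S j j := by
    by_contra hcon
    push_neg at hcon
    have := Finset.sum_lt_sum_of_nonempty (Finset.univ_nonempty) (fun j _ => hcon j)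
    rw [Finset.sum_const, nsmul_eq_mul, hcard] at this
    rw [ht] at hc; linarith
  have hSji : S j i = S i j := (congrFun (congrFun hsym j) i : S i j = S j i).symm
  by_cases hij : i = j
  · subst hij
    have hii : S i i = c := le_antisymm hi hj
    refine ⟨Pi.single i 1, by simp [Pi.single_apply, Finset.sum_ite_eq'], ?_⟩
    have h1 : (S *ᵥ (Pi.single i 1 : Fin n → ℝ)) = fun k => S k i := by
      ext k
      simp [Matrix.mulVec, dotProduct, Pi.single_apply, Finset.sum_ite_eq']
    rw [h1]
    simp [dotProduct, Pi.single_apply, hii]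
  · set g : ℝ → ℝ := fun θ =>
      (Real.cos θ)^2 * S i i + (Real.sin θ)^2 * S j j
        + 2 * Real.cos θ * Real.sin θ * S i j with hg
    have hgc : Continuous g := by fun_prop
    have hmem : c ∈ Set.Icc (g 0) (g (Real.pi/2)) := by
      constructor <;> simp [hg] <;> assumption
    obtain ⟨θ, _, hθ⟩ := intermediate_value_Icc
      (by positivity : (0:ℝ) ≤ Real.pi/2) hgc.continuousOn hmem
    set v : Fin n → ℝ := fun k => if k = i then Real.cos θ else
      if k = j then Real.sin θ else 0 with hv
    have key : ∀ f : Fin n → ℝ, ∑ k, v k * f k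
        = Real.cos θ * f i + Real.sin θ * f j := by
      intro f
      have hpt : ∀ k, v k * f k = (if k = i then Real.cos θ * f i else 0)
          + (if k = j then Real.sin θ * f j else 0) := by
        intro k
        by_cases h1 : k = i
        · subst h1; simp [hv, hij]
        · by_cases h2 : k = j
          · subst h2; simp [hv, h1]
          · simp [hv, h1, h2]
      rw [Finset.sum_congr rfl (fun k _ => hpt k), Finset.sum_add_distrib,
        Finset.sum_ite_eq', Finset.sum_ite_eq']
      simp
    have hvi : v i = Real.cos θ := by simp [hv]
    have hvj : v j = Real.sin θ := by simp [hv, hij, Ne.symm hij]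
    refine ⟨v, ?_, ?_⟩
    · rw [key v, hvi, hvj]
      have := Real.sin_sq_add_cos_sq θ
      ring_nf
      ring_nf at this
      linarith
    · have hmv : ∀ k, (S *ᵥ v) k = Real.cos θ * S k i + Real.sin θ * S k j := by
        intro k
        have : (S *ᵥ v) k = ∑ l, v l * S k l := by
          simp [Matrix.mulVec, dotProduct, mul_comm]
        rw [this, key (fun l => S k l)]
      have : v ⬝ᵥ (S *ᵥ v) = ∑ k, v k * (S *ᵥ v) k := rfl
      rw [this, key (fun k => (S *ᵥ v) k), hmv i, hmv j, hSji, ← hθ]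
      simp [hg]; ring

private lemma key_antisym' : ∀ (n : ℕ) (S : Matrix (Fin n) (Fin n) ℝ), Sᵀ = S →
    ∃ A : Matrix (Fin n) (Fin n) ℝ, Aᵀ = -A ∧
      (S + A).charpoly = (X - C (S.trace / n)) ^ n := by
  intro n
  induction n with
  | zero =>
    intro S _
    exact ⟨0, by ext i j; exact i.elim0, by
      rw [pow_zero]; simp [Matrix.charpoly, Matrix.det_isEmpty]⟩
  | succ n ih =>
    intro S hsym
    set c : ℝ := S.trace / (n + 1 : ℕ) with hcdef
    have hc : S.trace = ((n+1 : ℕ) : ℝ) * c := by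
      rw [hcdef]; field_simp
    obtain ⟨v, hv1, hvq⟩ := exists_unit_vec_quad' (Nat.succ_pos n) S hsym c hc
    let vE : EuclideanSpace ℝ (Fin (n+1)) := WithLp.toLp 2 v
    have hinner : (inner ℝ vE vE : ℝ) = 1 := by
      rw [PiLp.inner_apply]
      simpa [vE, sq] using hv1
    have hON : Orthonormal ℝ (Set.restrict {(0 : Fin (n+1))} (fun _ => vE)) := by
      rw [orthonormal_iff_ite]
      rintro ⟨x, hx⟩ ⟨y, hy⟩
      simp only [Set.mem_singleton_iff] at hx hy
      subst hx; subst hy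
      rw [if_pos rfl]
      exact hinner
    obtain ⟨b, hb⟩ := hON.exists_orthonormalBasis_extension_of_card_eq
      (by rw [finrank_euclideanSpace, Fintype.card_fin])
    have hb0 : b 0 = vE := hb 0 rfl
    set Q : Matrix (Fin (n+1)) (Fin (n+1)) ℝ := Matrix.of fun k i => b i k with hQdef
    have hQ : Qᵀ * Q = 1 := by
      ext i j
      have h := (orthonormal_iff_ite (𝕜 := ℝ)).mp b.orthonormal i j
      rw [PiLp.inner_apply] at h
      simp only [RCLike.inner_apply, conj_trivial] at h
      simp only [Matrix.mul_apply, Matrix.transpose_apply, hQdef, Matrix.of_apply,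
        Matrix.one_apply]
      rw [← h]; exact Finset.sum_congr rfl fun _ _ => mul_comm _ _
    have hQQ : Q * Qᵀ = 1 := mul_eq_one_comm.mp hQ
    set M : Matrix (Fin (n+1)) (Fin (n+1)) ℝ := Qᵀ * S * Q with hMdef
    have hMsym : Mᵀ = M := by
      rw [hMdef, Matrix.transpose_mul, Matrix.transpose_mul, Matrix.transpose_transpose,
        hsym, Matrix.mul_assoc]
    have hM00 : M 0 0 = c := by
      have h1 : M 0 0 = ∑ l, ∑ k, (Q k 0 * S k l) * Q l 0 := by
        simp [hMdef, Matrix.mul_apply, Finset.sum_mul]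
      have h2 : v ⬝ᵥ (S *ᵥ v) = ∑ k, ∑ l, v k * (S k l * v l) := by
        simp only [dotProduct, Matrix.mulVec, Finset.mul_sum]
      have hQk0 : ∀ k, Q k 0 = v k := fun k => by
        simp only [hQdef, Matrix.of_apply, hb0]; rfl
      rw [h2] at hvq
      rw [h1, Finset.sum_comm, ← hvq]
      refine Finset.sum_congr rfl fun k _ => Finset.sum_congr rfl fun l _ => ?_
      rw [hQk0, hQk0]; ring
    have htrM : M.trace = S.trace := by
      rw [hMdef, Matrix.trace_mul_cycle, hQQ, Matrix.one_mul]
    set M' : Matrix (Fin n) (Fin n) ℝ := M.submatrix Fin.succ Fin.succ with hM'def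
    have hM'sym : M'ᵀ = M' := by
      rw [hM'def, Matrix.transpose_submatrix, hMsym]
    have htrM' : M'.trace = n * c := by
      have h3 : M.trace = M 0 0 + M'.trace := by
        simp only [Matrix.trace, Matrix.diag]
        rw [Fin.sum_univ_succ]
        rfl
      rw [htrM, hc, hM00] at h3
      push_cast at h3 ⊢
      linarith
    obtain ⟨A', hA'sym, hA'char⟩ := ih M' hM'sym
    have hchar' : (M' + A').charpoly = (X - C c) ^ n := by
      rcases Nat.eq_zero_or_pos n with hn0 | hn0
      · subst hn0
        rw [pow_zero]
        simp [Matrix.charpoly, Matrix.det_isEmpty]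
      · rw [hA'char, htrM']
        congr 2
        have : (n : ℝ) ≠ 0 := Nat.cast_ne_zero.mpr hn0.ne'
        field_simp
    set e : Fin 1 ⊕ Fin n ≃ Fin (n+1) := finSumFinEquiv.trans (finCongr (Nat.add_comm 1 n))
      with hedef
    have he0 : e (Sum.inl 0) = 0 := rfl
    have hes : ∀ k : Fin n, e (Sum.inr k) = Fin.succ k := by
      intro k
      apply Fin.ext
      simp [hedef, finSumFinEquiv, Fin.natAdd]
      omega
    set u : Matrix (Fin 1) (Fin n) ℝ := Matrix.of fun _ l => M 0 (Fin.succ l) with hudef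
    set w : Matrix (Fin n) (Fin 1) ℝ := Matrix.of fun k _ => M (Fin.succ k) 0 with hwdef
    have hMskew : ∀ l, M 0 (Fin.succ l) = M (Fin.succ l) 0 :=
      fun l => (congrFun (congrFun hMsym (Fin.succ l)) 0 : M 0 _ = M _ 0)
    have hMb : (Matrix.reindex e.symm e.symm M)
        = Matrix.fromBlocks (Matrix.of fun _ _ => c) u w M' := by
      ext i j
      rcases i with i | i <;> rcases j with j | j
      · obtain rfl : i = 0 := Subsingleton.elim i 0
        obtain rfl : j = 0 := Subsingleton.elim j 0
        simp only [Matrix.reindex_apply, Equiv.symm_symm, Matrix.submatrix_apply,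
          Matrix.fromBlocks_apply₁₁, Matrix.of_apply, he0]
        exact hM00
      · obtain rfl : i = 0 := Subsingleton.elim i 0
        simp only [Matrix.reindex_apply, Equiv.symm_symm, Matrix.submatrix_apply,
          Matrix.fromBlocks_apply₁₂, Matrix.of_apply, he0, hes]
        rfl
      · obtain rfl : j = 0 := Subsingleton.elim j 0
        simp only [Matrix.reindex_apply, Equiv.symm_symm, Matrix.submatrix_apply,
          Matrix.fromBlocks_apply₂₁, Matrix.of_apply, he0, hes]
        rfl
      · simp only [Matrix.reindex_apply, Equiv.symm_symm, Matrix.submatrix_apply,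
          Matrix.fromBlocks_apply₂₂, hes]
        rfl
    set Ab : Matrix (Fin 1 ⊕ Fin n) (Fin 1 ⊕ Fin n) ℝ :=
      Matrix.fromBlocks 0 (-u) w A' with hAbdef
    have hwu : wᵀ = u := by
      ext z l
      exact (hMskew l).symm
    have huw : (-u)ᵀ = -w := by
      ext l z
      exact congrArg Neg.neg (hMskew l)
    have hAbT : Abᵀ = -Ab := by
      rw [hAbdef, Matrix.fromBlocks_transpose, hwu, huw, hA'sym, Matrix.fromBlocks_neg,
        neg_zero, neg_neg, Matrix.transpose_zero]
    have hblk : (Matrix.reindex e.symm e.symm M + Ab).charpoly = (X - C c) ^ (n+1) := by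
      rw [hMb, hAbdef, Matrix.fromBlocks_add]
      have hz : u + -u = 0 := add_neg_cancel u
      rw [hz]
      have h1x1 : ((Matrix.of fun _ _ => c : Matrix (Fin 1) (Fin 1) ℝ) + 0).charpoly
          = X - C c := by
        rw [add_zero, Matrix.charpoly, Matrix.det_fin_one, Matrix.charmatrix_apply_eq]
        rfl
      rw [Matrix.charpoly_fromBlocks_zero₁₂, h1x1, hchar', pow_succ]
      ring
    have hre : Matrix.reindex e e (Matrix.reindex e.symm e.symm M) = M := by
      rw [← Matrix.reindex_symm]
      exact (Matrix.reindex e e).apply_symm_apply M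
    have hMre : M + Matrix.reindex e e Ab
        = Matrix.reindex e e (Matrix.reindex e.symm e.symm M + Ab) := by
      conv_lhs => rw [← hre]
      ext i j
      simp [Matrix.reindex_apply, Matrix.submatrix_apply]
    have hcharEnd : (M + Matrix.reindex e e Ab).charpoly = (X - C c) ^ (n+1) := by
      rw [hMre, Matrix.charpoly_reindex, hblk]
    refine ⟨Q * (Matrix.reindex e e Ab) * Qᵀ, ?_, ?_⟩
    · have hAbT' : (Matrix.reindex e e Ab)ᵀ = -(Matrix.reindex e e Ab) := by
        rw [Matrix.transpose_reindex, hAbT]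
        ext i j
        simp [Matrix.reindex_apply, Matrix.submatrix_apply]
      rw [Matrix.transpose_mul, Matrix.transpose_mul, Matrix.transpose_transpose, hAbT']
      noncomm_ring
    · have hQMQ : Q * M * Qᵀ = S := by
        rw [hMdef]
        calc Q * (Qᵀ * S * Q) * Qᵀ = (Q * Qᵀ) * S * (Q * Qᵀ) := by noncomm_ring
        _ = S := by rw [hQQ]; simp
      have hSA : S + Q * (Matrix.reindex e e Ab) * Qᵀ
          = Q * (M + Matrix.reindex e e Ab) * Qᵀ := by
        conv_lhs => rw [← hQMQ]
        noncomm_ring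
      rw [hSA, charpoly_conj' Q Qᵀ _ hQQ hQ, hcharEnd]

end Aux

/-- For `S` symmetric positive definite:
(a) for every antisymmetric `J`, `(I+J)S` has an eigenvalue with real part `≤ Tr(S)/N`;
(b) there is an antisymmetric `J` with all eigenvalues of `(I+J)S` having real part
`= Tr(S)/N`; consequently the maximum over antisymmetric `J` of the minimal real part
of the spectrum of `(I+J)S` equals `Tr(S)/N` and is attained. -/
theorem optimal_spectral_abscissa
    (N : ℕ) (hN : 1 ≤ N) (S : Matrix (Fin N) (Fin N) ℝ) (hS : S.PosDef) :
    (∀ J : Matrix (Fin N) (Fin N) ℝ, Jᵀ = -J →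
      ∃ μ ∈ spectrum ℂ (((1 + J) * S).map (Complex.ofReal)), μ.re ≤ S.trace / N) ∧
    (∃ J : Matrix (Fin N) (Fin N) ℝ, Jᵀ = -J ∧
      ∀ μ ∈ spectrum ℂ (((1 + J) * S).map (Complex.ofReal)), μ.re = S.trace / N) ∧
    IsGreatest
      {r : ℝ | ∃ J : Matrix (Fin N) (Fin N) ℝ, Jᵀ = -J ∧
        IsLeast {x : ℝ |
          ∃ μ ∈ spectrum ℂ (((1 + J) * S).map (Complex.ofReal)), μ.re = x} r}
      (S.trace / N) := by
  classical
  have hNR : (N : ℝ) ≠ 0 := Nat.cast_ne_zero.mpr (by omega)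
  have hN0 : N ≠ 0 := by omega
  set c : ℝ := S.trace / N with hcdef
  have hsymS : Sᵀ = S := by
    ext i j
    exact congrFun (congrFun hS.isHermitian.eq i) j
  -- Part (a)
  have parta : ∀ J : Matrix (Fin N) (Fin N) ℝ, Jᵀ = -J →
      ∃ μ ∈ spectrum ℂ (((1 + J) * S).map (Complex.ofReal)), μ.re ≤ c := by
    intro J hJ
    set B : Matrix (Fin N) (Fin N) ℝ := (1 + J) * S with hBdef
    have htrJS : (J * S).trace = 0 := by
      have h1 : (J * S).trace = ((J * S)ᵀ).trace := (Matrix.trace_transpose _).symm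
      rw [Matrix.transpose_mul, hsymS, hJ, Matrix.mul_neg, Matrix.trace_neg,
        Matrix.trace_mul_comm] at h1
      rw [Matrix.trace_mul_comm]
      linarith
    have htrB : B.trace = S.trace := by
      rw [hBdef, add_mul, one_mul, Matrix.trace_add, htrJS, add_zero]
    set Bc : Matrix (Fin N) (Fin N) ℂ := B.map Complex.ofReal with hBc
    have htrBc : Bc.trace = (S.trace : ℂ) := by
      rw [hBc, ← htrB]
      simp [Matrix.trace, Matrix.diag, Matrix.map_apply]
    set p : Polynomial ℂ := Bc.charpoly with hp
    have hdeg : p.natDegree = N := by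
      rw [hp, Matrix.charpoly_natDegree_eq_dim, Fintype.card_fin]
    have hcard : p.roots.card = N := by
      rw [← hdeg]
      exact (Polynomial.splits_iff_card_roots).mp (IsAlgClosed.splits p)
    have hsum : (S.trace : ℂ) = p.roots.sum := by
      rw [← htrBc]
      exact Matrix.trace_eq_sum_roots_charpoly Bc
    have hresum : (p.roots.map Complex.re).sum = S.trace := by
      have h := congrArg Complex.re hsum
      rw [Complex.ofReal_re] at h
      rw [h]
      simpa [Complex.coe_reAddGroupHom] using
        (map_multiset_sum Complex.reAddGroupHom p.roots).symm
    obtain ⟨μ, hμmem, hμre⟩ : ∃ μ ∈ p.roots, μ.re ≤ c := by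
      by_contra hcon
      push_neg at hcon
      have hT : ∀ x ∈ p.roots.map Complex.re, c < x := by
        intro x hx
        obtain ⟨μ, hμ, rfl⟩ := Multiset.mem_map.mp hx
        exact hcon μ hμ
      have hne : p.roots.map Complex.re ≠ 0 := by
        intro h0
        have : (p.roots.map Complex.re).card = N := by
          rw [Multiset.card_map, hcard]
        rw [h0] at this
        simp at this
        omega
      obtain ⟨x, hx⟩ := Multiset.exists_mem_of_ne_zero hne
      obtain ⟨t, hts⟩ := Multiset.exists_cons_of_mem hx
      have hcardt : t.card = N - 1 := by
        have : (p.roots.map Complex.re).card = N := by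
          rw [Multiset.card_map, hcard]
        rw [hts, Multiset.card_cons] at this
        omega
      have hsumt : (N - 1 : ℕ) • c ≤ t.sum := by
        have hall : ∀ y ∈ t, c ≤ y := fun y hy =>
          (hT y (hts ▸ Multiset.mem_cons_of_mem hy)).le
        have := Multiset.card_nsmul_le_sum hall
        rwa [hcardt] at this
      have hxc : c < x := hT x hx
      have htot : (p.roots.map Complex.re).sum = x + t.sum := by
        rw [hts, Multiset.sum_cons]
      rw [hresum] at htot
      have hns : ((N - 1 : ℕ) : ℝ) * c ≤ t.sum := by
        rw [← nsmul_eq_mul]; exact hsumt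
      have hcast : ((N - 1 : ℕ) : ℝ) = (N : ℝ) - 1 := by
        have : 1 ≤ N := hN
        push_cast [Nat.cast_sub this]
        ring
      rw [hcast] at hns
      have hceq : S.trace = (N : ℝ) * c := by
        rw [hcdef]; field_simp
      nlinarith
    refine ⟨μ, ?_, hμre⟩
    rw [mem_spectrum_iff_isRoot']
    exact Polynomial.isRoot_of_mem_roots hμmem
  -- Part (b)
  obtain ⟨A, hAT, hAchar⟩ := key_antisym' N S hsymS
  open scoped MatrixOrder in
  set R : Matrix (Fin N) (Fin N) ℝ := CFC.sqrt S with hRdef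
  open scoped MatrixOrder in
  have hRR : R * R = S := CFC.sqrt_mul_sqrt_self S hS.posSemidef.nonneg
  have hRsym : Rᵀ = R := by
    ext i j
    open scoped MatrixOrder in
    exact congrFun (congrFun (CFC.sqrt_nonneg S).posSemidef.isHermitian.eq i) j
  have hdet : IsUnit R.det := by
    rw [isUnit_iff_ne_zero]
    intro h0
    have hmul : R.det * R.det = S.det := by rw [← Matrix.det_mul, hRR]
    rw [h0, mul_zero] at hmul
    exact hS.det_pos.ne' hmul.symm
  have h1 : R⁻¹ * R = 1 := Matrix.nonsing_inv_mul R hdet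
  have h2 : R * R⁻¹ = 1 := Matrix.mul_nonsing_inv R hdet
  have hRinvT : (R⁻¹)ᵀ = R⁻¹ := by rw [Matrix.transpose_nonsing_inv, hRsym]
  set J₀ : Matrix (Fin N) (Fin N) ℝ := R⁻¹ * A * R⁻¹ with hJ₀def
  have hJ₀T : J₀ᵀ = -J₀ := by
    rw [hJ₀def, Matrix.transpose_mul, Matrix.transpose_mul, hRinvT, hAT]
    noncomm_ring
  have hconj : (1 + J₀) * S = R⁻¹ * (S + A) * R := by
    rw [hJ₀def, ← hRR]
    have e1 : (1 + R⁻¹ * A * R⁻¹) * (R * R)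
        = R * R + R⁻¹ * A * ((R⁻¹ * R) * R) := by noncomm_ring
    have e2 : R⁻¹ * (R * R + A) * R
        = (R⁻¹ * R) * (R * R) + R⁻¹ * A * R := by noncomm_ring
    rw [e1, e2, h1]
    simp [Matrix.one_mul, Matrix.mul_one]
  have hcharJ : ((1 + J₀) * S).charpoly = (Polynomial.X - Polynomial.C c) ^ N := by
    rw [hconj, charpoly_conj' _ _ _ h1 h2, hAchar]
  have hmapchar : (((1 + J₀) * S).map Complex.ofReal).charpoly
      = (Polynomial.X - Polynomial.C ((c : ℝ) : ℂ)) ^ N := by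
    have hh : ((1 + J₀) * S).map Complex.ofReal
        = ((1 + J₀) * S).map (Complex.ofRealHom : ℝ →+* ℂ) := rfl
    rw [hh, Matrix.charpoly_map, hcharJ, Polynomial.map_pow, Polynomial.map_sub,
      Polynomial.map_X, Polynomial.map_C, Complex.ofRealHom_eq_coe]
  have hspec : ∀ μ ∈ spectrum ℂ (((1 + J₀) * S).map Complex.ofReal),
      μ = ((c : ℝ) : ℂ) := by
    intro μ hμ
    rw [mem_spectrum_iff_isRoot', hmapchar] at hμ
    have := hμ
    rw [Polynomial.IsRoot, Polynomial.eval_pow, Polynomial.eval_sub,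
      Polynomial.eval_X, Polynomial.eval_C, pow_eq_zero_iff hN0, sub_eq_zero] at this
    exact this
  have hspecmem : ((c : ℝ) : ℂ) ∈ spectrum ℂ (((1 + J₀) * S).map Complex.ofReal) := by
    rw [mem_spectrum_iff_isRoot', hmapchar]
    rw [Polynomial.IsRoot, Polynomial.eval_pow, Polynomial.eval_sub,
      Polynomial.eval_X, Polynomial.eval_C, sub_self]
    exact zero_pow hN0
  have partb : ∀ μ ∈ spectrum ℂ (((1 + J₀) * S).map Complex.ofReal), μ.re = c := by
    intro μ hμ
    rw [hspec μ hμ, Complex.ofReal_re]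
  refine ⟨parta, ⟨J₀, hJ₀T, partb⟩, ?_, ?_⟩
  · refine ⟨J₀, hJ₀T, ⟨⟨((c : ℝ) : ℂ), hspecmem, Complex.ofReal_re _⟩, ?_⟩⟩
    rintro x ⟨μ, hμ, rfl⟩
    exact (partb μ hμ).ge
  · rintro r ⟨J, hJT, hleast⟩
    obtain ⟨μ, hμs, hμre⟩ := parta J hJT
    exact le_trans (hleast.2 ⟨μ, hμs, rfl⟩) hμre
end

section
/- Let J̃ be an N×N real antisymmetric matrix, S an N×N real symmetric positive definite matrix, and Q an N×N real symmetric positive definite matrix with eigenvalues λ_1,…,λ_N > 0 (counted with multiplicity) and associated eigenvectors ψ_1,…,ψ_N forming an orthonormal basis of ℝ^N (Qψ_k = λ_k ψ_k). Then the equation J̃Q − QJ̃ = −QS − SQ + (2·Tr(S)/N)·Q holds if and only if both of the following hold: for every k ∈ {1,…,N}, ⟨ψ_k, Sψ_k⟩ = Tr(S)/N; and for all j ≠ k in {1,…,N}, (λ_j − λ_k)·⟨ψ_j, J̃ψ_k⟩ = (λ_k + λ_j)·⟨ψ_j, Sψ_k⟩. -/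
open Matrix

/-- With `J̃` antisymmetric, `S, Q` symmetric positive definite, the
eigenvalues `λ_k > 0` of `Q` with orthonormal eigenvectors `ψ_k`, the equation
`J̃Q - QJ̃ = -QS - SQ + (2Tr(S)/N)Q` holds iff `⟨ψ_k, Sψ_k⟩ = Tr(S)/N` for all `k` and
`(λ_j - λ_k)⟨ψ_j, J̃ψ_k⟩ = (λ_k + λ_j)⟨ψ_j, Sψ_k⟩`. -/
theorem J1_iff_conditions
    (N : ℕ) (hN : 1 ≤ N) (S Q J : Matrix (Fin N) (Fin N) ℝ)
    (hS : S.PosDef) (hQ : Q.PosDef) (hJ : Jᵀ = -J)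
    (lam : Fin N → ℝ) (ψ : Fin N → (Fin N → ℝ))
    (hlam : ∀ k, 0 < lam k)
    (hortho : ∀ j k, ψ j ⬝ᵥ ψ k = if j = k then 1 else 0)
    (heig : ∀ k, Q *ᵥ ψ k = lam k • ψ k) :
    (J * Q - Q * J = -(Q * S) - S * Q + (2 * S.trace / N) • Q) ↔
      ((∀ k, ψ k ⬝ᵥ (S *ᵥ ψ k) = S.trace / N) ∧
        ∀ j k, j ≠ k →
          (lam j - lam k) * (ψ j ⬝ᵥ (J *ᵥ ψ k)) =
            (lam k + lam j) * (ψ j ⬝ᵥ (S *ᵥ ψ k))) := by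
  have hNne : (N : ℝ) ≠ 0 := Nat.cast_ne_zero.mpr (by omega)
  have hQsymm : Qᵀ = Q := hQ.1
  set c : ℝ := 2 * S.trace / N with hc
  set M : Matrix (Fin N) (Fin N) ℝ :=
    J * Q - Q * J - (-(Q * S) - S * Q + c • Q) with hM
  have hQleft : ∀ (j : Fin N) (v : Fin N → ℝ),
      ψ j ⬝ᵥ (Q *ᵥ v) = lam j * (ψ j ⬝ᵥ v) := by
    intro j v
    rw [dotProduct_mulVec, ← mulVec_transpose, hQsymm, heig j, smul_dotProduct]
    rfl
  have key : ∀ (j k : Fin N),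
      ψ j ⬝ᵥ (M *ᵥ ψ k)
        = (lam k - lam j) * (ψ j ⬝ᵥ (J *ᵥ ψ k))
          + (lam j + lam k) * (ψ j ⬝ᵥ (S *ᵥ ψ k))
          - c * lam k * (if j = k then 1 else 0) := by
    intro j k
    have h1 : ψ j ⬝ᵥ ((J * Q) *ᵥ ψ k) = lam k * (ψ j ⬝ᵥ (J *ᵥ ψ k)) := by
      rw [← mulVec_mulVec, heig k, mulVec_smul, dotProduct_smul]; rfl
    have h2 : ψ j ⬝ᵥ ((Q * J) *ᵥ ψ k) = lam j * (ψ j ⬝ᵥ (J *ᵥ ψ k)) := by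
      rw [← mulVec_mulVec, hQleft]
    have h3 : ψ j ⬝ᵥ ((Q * S) *ᵥ ψ k) = lam j * (ψ j ⬝ᵥ (S *ᵥ ψ k)) := by
      rw [← mulVec_mulVec, hQleft]
    have h4 : ψ j ⬝ᵥ ((S * Q) *ᵥ ψ k) = lam k * (ψ j ⬝ᵥ (S *ᵥ ψ k)) := by
      rw [← mulVec_mulVec, heig k, mulVec_smul, dotProduct_smul]; rfl
    have h5 : ψ j ⬝ᵥ ((c • Q) *ᵥ ψ k) = c * lam k * (if j = k then 1 else 0) := by
      rw [smul_mulVec, dotProduct_smul, heig k, dotProduct_smul, hortho]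
      simp [mul_assoc]
    rw [hM]
    simp only [sub_mulVec, add_mulVec, neg_mulVec, dotProduct_sub,
      dotProduct_add, dotProduct_neg, h1, h2, h3, h4, h5]
    ring
  -- M = 0 iff all entries in ψ-basis vanish
  set P : Matrix (Fin N) (Fin N) ℝ := Matrix.of ψ with hP
  have hPPt : P * Pᵀ = 1 := by
    ext j k
    simp only [mul_apply, hP, Matrix.of_apply, transpose_apply, one_apply]
    simpa [dotProduct] using hortho j k
  have hPtP : Pᵀ * P = 1 := mul_eq_one_comm.mp hPPt
  have hentry : ∀ j k, (P * M * Pᵀ) j k = ψ j ⬝ᵥ (M *ᵥ ψ k) := by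
    intro j k
    simp only [mul_apply, hP, Matrix.of_apply, transpose_apply, dotProduct,
      mulVec, Finset.sum_mul, Finset.mul_sum]
    rw [Finset.sum_comm]
    apply Finset.sum_congr rfl
    intro i _
    apply Finset.sum_congr rfl
    intro l _
    ring
  have hMzero : M = 0 ↔ ∀ j k, ψ j ⬝ᵥ (M *ᵥ ψ k) = 0 := by
    constructor
    · intro h j k; rw [h]; simp
    · intro h
      have hPM : P * M * Pᵀ = 0 := by
        ext j k; rw [hentry]; exact h j k
      calc M = (Pᵀ * P) * M * (Pᵀ * P) := by rw [hPtP]; simp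
        _ = Pᵀ * (P * M * Pᵀ) * P := by noncomm_ring
        _ = 0 := by rw [hPM]; simp
  have heqn : (J * Q - Q * J = -(Q * S) - S * Q + c • Q) ↔ M = 0 := by
    rw [hM, sub_eq_zero]
  rw [heqn, hMzero]
  constructor
  · intro h
    constructor
    · intro k
      have := h k k
      rw [key k k] at this
      simp only [if_pos rfl, if_true, eq_self_iff_true, sub_self, zero_mul, zero_add, mul_one] at this
      have hne : (2 * lam k) ≠ 0 := by have := hlam k; positivity
      have h6 : (2 * lam k) * (ψ k ⬝ᵥ (S *ᵥ ψ k)) = (2 * lam k) * (S.trace / N) := by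
        rw [hc] at this
        have hrw : 2 * S.trace / ↑N * lam k = 2 * lam k * (S.trace / ↑N) := by ring
        linarith [hrw]
      exact mul_left_cancel₀ hne h6
    · intro j k hjk
      have := h j k
      rw [key j k, if_neg hjk] at this
      linear_combination -this
  · rintro ⟨hd, ho⟩ j k
    rw [key j k]
    by_cases hjk : j = k
    · subst hjk
      rw [hd j]
      simp only [if_pos rfl, eq_self_iff_true, if_true, sub_self, zero_mul, zero_add, mul_one]
      rw [hc]
      field_simp
      ring
    · rw [if_neg hjk]
      have := ho j k hjk
      linear_combination -this
end

section
/- For every N×N real symmetric positive definite matrix S, there exists an orthonormal basis ψ_1,…,ψ_N of ℝ^N such that ⟨ψ_k, Sψ_k⟩ = Tr(S)/N for every k ∈ {1,…,N}. -/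
open Matrix
open Module
open scoped RealInnerProductSpace

lemma trace_eq_sum_inner' {E : Type*} [NormedAddCommGroup E] [InnerProductSpace ℝ E]
    [FiniteDimensional ℝ E] {ι : Type*} [Fintype ι] [DecidableEq ι]
    (b : OrthonormalBasis ι ℝ E) (T : E →ₗ[ℝ] E) :
    LinearMap.trace ℝ E T = ∑ i, ⟪b i, T (b i)⟫ := by
  rw [LinearMap.trace_eq_matrix_trace ℝ b.toBasis T, Matrix.trace]
  congr 1
  ext i
  simp [Matrix.diag, LinearMap.toMatrix_apply, b.repr_apply_apply]

lemma exists_unit_inner (n : ℕ) (E : Type) [NormedAddCommGroup E] [InnerProductSpace ℝ E]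
    [FiniteDimensional ℝ E] (hn : finrank ℝ E = n + 1) (T : E →ₗ[ℝ] E) (hT : T.IsSymmetric)
    (c : ℝ) (hc : c = LinearMap.trace ℝ E T / (n + 1)) :
    ∃ v : E, ⟪v, v⟫ = 1 ∧ ⟪v, T v⟫ = c := by
  set e := hT.eigenvectorBasis hn with he
  set μ := hT.eigenvalues hn with hμ
  have hee : ∀ i j, ⟪e i, e j⟫ = if i = j then 1 else 0 := orthonormal_iff_ite.mp e.orthonormal
  have hTe : ∀ i, T (e i) = μ i • e i := fun i => hT.apply_eigenvectorBasis hn i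
  have htr : LinearMap.trace ℝ E T = ∑ i, μ i := by
    rw [trace_eq_sum_inner' e]
    refine Finset.sum_congr rfl fun i _ => ?_
    rw [hTe i, real_inner_smul_right, hee i i]
    simp
  have hsum : ∑ _i : Fin (n + 1), c = ∑ i, μ i := by
    rw [Finset.sum_const, ← htr, hc]
    simp
    field_simp
  obtain ⟨i, _, hi⟩ := Finset.exists_le_of_sum_le (Finset.univ_nonempty) hsum.ge
  obtain ⟨j, _, hj⟩ := Finset.exists_le_of_sum_le (Finset.univ_nonempty) hsum.le
  -- μ i ≤ c ≤ μ j
  by_cases h : c ≤ μ i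
  · refine ⟨e i, by simpa using hee i i, ?_⟩
    rw [hTe i, real_inner_smul_right, hee i i]
    simp [le_antisymm hi h]
  · push_neg at h
    have hij : i ≠ j := fun hij => h.not_ge (hij ▸ hj)
    have hd : 0 < μ j - μ i := by linarith
    set α : ℝ := (μ j - c) / (μ j - μ i) with hα
    have hα0 : 0 ≤ α := div_nonneg (by linarith) hd.le
    have hα1 : α ≤ 1 := by rw [div_le_one hd]; linarith
    have hii : ⟪e i, e i⟫ = 1 := by rw [hee]; simp
    have hjj : ⟪e j, e j⟫ = 1 := by rw [hee]; simp
    have hij0 : ⟪e i, e j⟫ = 0 := by rw [hee]; simp [hij]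
    have hji0 : ⟪e j, e i⟫ = 0 := by rw [hee]; simp [hij.symm]
    have s1 : Real.sqrt α ^ 2 = α := Real.sq_sqrt hα0
    have s2 : Real.sqrt (1 - α) ^ 2 = 1 - α := Real.sq_sqrt (by linarith)
    have hc' : α * μ i + (1 - α) * μ j = c := by rw [hα]; field_simp; ring
    refine ⟨Real.sqrt α • e i + Real.sqrt (1 - α) • e j, ?_, ?_⟩
    · simp only [inner_add_left, inner_add_right, real_inner_smul_left, real_inner_smul_right,
        hii, hjj, hij0, hji0, mul_zero, zero_mul, mul_one, add_zero, zero_add]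
      linear_combination s1 + s2
    · rw [map_add, LinearMap.map_smul, LinearMap.map_smul, hTe i, hTe j]
      simp only [inner_add_left, inner_add_right, real_inner_smul_left, real_inner_smul_right,
        hii, hjj, hij0, hji0, mul_zero, zero_mul, mul_one, add_zero, zero_add]
      linear_combination hc' + μ i * s1 + μ j * s2


lemma key : ∀ (n : ℕ) (E : Type) (_ : NormedAddCommGroup E), ∀ (_ : @InnerProductSpace ℝ E _ _),
    ∀ (_ : FiniteDimensional ℝ E), finrank ℝ E = n → ∀ (T : E →ₗ[ℝ] E), T.IsSymmetric →
    ∃ ψ : Fin n → E, (∀ j k, ⟪ψ j, ψ k⟫ = if j = k then 1 else 0) ∧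
      ∀ k, ⟪ψ k, T (ψ k)⟫ = LinearMap.trace ℝ E T / n := by
  intro n
  induction n with
  | zero => intro E _ _ _ _ T _; exact ⟨Fin.elim0, fun j => j.elim0, fun k => k.elim0⟩
  | succ n IH =>
    intro E _ _ _ hn T hT
    set c : ℝ := LinearMap.trace ℝ E T / (n + 1 : ℕ) with hc
    have hc' : c = LinearMap.trace ℝ E T / (n + 1) := by rw [hc]; norm_num
    obtain ⟨v, hv1, hvc⟩ := exists_unit_inner n E hn T hT c hc'
    have hv0 : v ≠ 0 := fun h => by simp [h] at hv1
    haveI : Fact (finrank ℝ E = n + 1) := ⟨hn⟩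
    set W := (ℝ ∙ v)ᗮ with hWdef
    have hWrank : finrank ℝ W = n := Submodule.finrank_orthogonal_span_singleton hv0
    set T' : W →ₗ[ℝ] W := (W.orthogonalProjectionOnto).toLinearMap ∘ₗ (T ∘ₗ W.subtype) with hT'def
    have hproj : ∀ w w' : W, ⟪w, T' w'⟫ = ⟪(w : E), T (w' : E)⟫ := by
      intro w w'
      show ⟪w, W.orthogonalProjectionOnto (T w')⟫ = _
      rw [Submodule.inner_orthogonalProjectionOnto_eq_of_mem_left]
    have hT'sym : T'.IsSymmetric := by
      intro w w'
      rw [real_inner_comm, hproj, hproj]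
      exact (real_inner_comm (T (w : E)) (w' : E)).trans (hT _ _)
    have hWperp : ∀ w : W, ⟪v, (w : E)⟫ = 0 := fun w =>
      Submodule.mem_orthogonal_singleton_iff_inner_right.mp w.2
    -- orthonormal basis of W
    set b : OrthonormalBasis (Fin n) ℝ W :=
      (stdOrthonormalBasis ℝ W).reindex (finCongr hWrank) with hb
    -- extended orthonormal family on E
    set f : Fin (n + 1) → E := Fin.cons v (fun k => (b k : E)) with hf
    have honf : Orthonormal ℝ f := by
      rw [orthonormal_iff_ite]
      intro j k
      refine Fin.cases ?_ (fun j => ?_) j <;>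
        [refine Fin.cases ?_ (fun k => ?_) k; refine Fin.cases ?_ (fun k => ?_) k]
      · simpa [hf] using hv1
      · simpa [hf, (Fin.succ_ne_zero k).symm] using hWperp (b k)
      · simpa [hf, real_inner_comm] using hWperp (b j)
      · have := orthonormal_iff_ite.mp b.orthonormal j k
        rw [Submodule.coe_inner] at this
        simpa [hf, Fin.succ_inj] using this
    have hsp : ⊤ ≤ Submodule.span ℝ (Set.range f) := by
      rw [honf.linearIndependent.span_eq_top_of_card_eq_finrank (by simp [hn])]
    set F : OrthonormalBasis (Fin (n + 1)) ℝ E := OrthonormalBasis.mk honf hsp with hF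
    have hFf : ∀ i, F i = f i := fun i => by rw [hF, OrthonormalBasis.coe_mk]
    have htrE : LinearMap.trace ℝ E T = ⟪v, T v⟫ + ∑ k, ⟪(b k : E), T (b k : E)⟫ := by
      rw [trace_eq_sum_inner' F T]
      simp_rw [hFf]
      rw [hf, Fin.sum_univ_succ]
      simp
    have htrW : LinearMap.trace ℝ W T' = n * c := by
      rw [trace_eq_sum_inner' b T']
      have : ∀ k, ⟪b k, T' (b k)⟫ = ⟪(b k : E), T (b k : E)⟫ := fun k => hproj _ _
      simp_rw [this]
      have h2 : LinearMap.trace ℝ E T = (n + 1 : ℕ) * c := by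
        rw [hc]; field_simp
      rw [hvc] at htrE
      push_cast at h2 ⊢
      linarith
    obtain ⟨ψ', hψ'1, hψ'2⟩ := IH W inferInstance inferInstance inferInstance hWrank T' hT'sym
    have hψ'c : ∀ k : Fin n, ⟪ψ' k, T' (ψ' k)⟫ = c := by
      intro k
      have hn0 : (n : ℝ) ≠ 0 := Nat.cast_ne_zero.mpr k.pos.ne'
      rw [hψ'2 k, htrW, mul_div_cancel_left₀ c hn0]
    refine ⟨Fin.cons v (fun k => (ψ' k : E)), ?_, ?_⟩
    · intro j k
      refine Fin.cases ?_ (fun j => ?_) j <;>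
        [refine Fin.cases ?_ (fun k => ?_) k; refine Fin.cases ?_ (fun k => ?_) k]
      · simpa using hv1
      · simpa [(Fin.succ_ne_zero k).symm] using hWperp (ψ' k)
      · simpa [real_inner_comm] using hWperp (ψ' j)
      · have := hψ'1 j k
        rw [Submodule.coe_inner] at this
        simpa [Fin.succ_inj] using this
    · intro k
      refine Fin.cases ?_ (fun k => ?_) k
      · simpa using hvc
      · have := hψ'c k
        rw [hproj] at this
        simpa using this

/-- For every symmetric positive definite `S` there is an orthonormal basis
`ψ_1, …, ψ_N` of `ℝ^N` such that `⟨ψ_k, Sψ_k⟩ = Tr(S)/N` for every `k`. -/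
theorem exists_orthonormal_basis_equal_diagonal
    (N : ℕ) (hN : 1 ≤ N) (S : Matrix (Fin N) (Fin N) ℝ) (hS : S.PosDef) :
    ∃ ψ : Fin N → (Fin N → ℝ),
      (∀ j k, ψ j ⬝ᵥ ψ k = if j = k then 1 else 0) ∧
      (∀ k, ψ k ⬝ᵥ (S *ᵥ ψ k) = S.trace / N) := by
  have hsym : (Matrix.toEuclideanLin S).IsSymmetric :=
    Matrix.isHermitian_iff_isSymmetric.mp hS.isHermitian
  obtain ⟨ψ, h1, h2⟩ := key N (EuclideanSpace ℝ (Fin N)) inferInstance inferInstance inferInstance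
    finrank_euclideanSpace_fin _ hsym
  have hmv : ∀ x : EuclideanSpace ℝ (Fin N), Matrix.toEuclideanLin S x = S *ᵥ x := fun x => rfl
  have htr : LinearMap.trace ℝ _ (Matrix.toEuclideanLin S) = S.trace := by
    rw [trace_eq_sum_inner' (EuclideanSpace.basisFun (Fin N) ℝ)]
    rw [Matrix.trace]
    refine Finset.sum_congr rfl fun i _ => ?_
    rw [EuclideanSpace.basisFun_apply, EuclideanSpace.inner_single_left]
    simp [hmv, Matrix.mulVec, dotProduct, EuclideanSpace.single_apply, Matrix.diag]
  refine ⟨fun k => ψ k, fun j k => ?_, fun k => ?_⟩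
  · have := h1 j k
    rw [PiLp.inner_apply] at this
    simpa [dotProduct, mul_comm] using this
  · have := h2 k
    rw [htr] at this
    rw [PiLp.inner_apply] at this
    simpa [dotProduct, mul_comm, hmv] using this
end

section
/- Let S be an N×N real symmetric positive definite matrix. There exists an N×N real antisymmetric matrix J̃ such that min{Re(λ) : λ an eigenvalue of S + J̃} = Tr(S)/N. Moreover Tr(S)/N ≥ min σ(S), where min σ(S) is the smallest eigenvalue of S, and this inequality is strict as soon as S admits two different eigenvalues. -/
open Matrix

lemma householder {n : ℕ} (v : Fin (n+1) → ℝ) (hv : v ⬝ᵥ v = 1) :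
    ∃ Q : Matrix (Fin (n+1)) (Fin (n+1)) ℝ, Qᵀ * Q = 1 ∧ ∀ j, Q j 0 = v j := by
  by_cases he : v = Pi.single 0 1
  · exact ⟨1, by simp, fun j => by simp [he, one_apply, Pi.single_apply, eq_comm]⟩
  · set w : Fin (n+1) → ℝ := v - Pi.single 0 1 with hw
    have hwne : w ≠ 0 := sub_ne_zero.mpr he
    set d : ℝ := w ⬝ᵥ w with hd
    have hdne : d ≠ 0 := fun h => hwne (dotProduct_self_eq_zero.mp h)
    have hdval : d = 2 * (1 - v 0) := by
      simp only [hd, hw, sub_dotProduct, dotProduct_sub, hv, single_dotProduct,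
        dotProduct_single, single_dotProduct]
      simp [Pi.single_apply]
      ring
    have hv0 : v 0 ≠ 1 := by
      intro h; apply hdne; rw [hdval, h]; ring
    set W : Matrix (Fin (n+1)) (Fin (n+1)) ℝ := vecMulVec w w with hW
    have hWsq : W * W = d • W := by
      ext i j
      simp only [mul_apply, hW, vecMulVec_apply, Matrix.smul_apply, smul_eq_mul, hd, dotProduct]
      rw [Finset.sum_mul]
      congr 1; ext k; ring
    have hWT : Wᵀ = W := by ext i j; simp [hW, vecMulVec_apply, mul_comm]
    set Q : Matrix (Fin (n+1)) (Fin (n+1)) ℝ := 1 - (2/d) • W with hQ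
    have hQT : Qᵀ = Q := by rw [hQ, transpose_sub, transpose_one, transpose_smul, hWT]
    refine ⟨Q, ?_, ?_⟩
    · rw [hQT, hQ]
      rw [sub_mul, mul_sub, mul_sub, one_mul, mul_one, one_mul, mul_smul_comm, smul_mul_assoc, hWsq,
        smul_smul, smul_smul]
      have : 2/d * (2/d) * d = 2/d + 2/d := by field_simp; ring
      rw [this, add_smul]
      abel
    · intro j
      have hw0 : w 0 = v 0 - 1 := by simp [hw, Pi.single_apply]
      have key : (2/d) * w 0 = -1 := by
        rw [hw0, hdval]
        have h1 : (1 : ℝ) - v 0 ≠ 0 := by intro h; apply hv0; linarith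
        field_simp
        ring
      rw [hQ]
      simp only [Matrix.sub_apply, Matrix.smul_apply, smul_eq_mul, hW, vecMulVec_apply, one_apply]
      have : 2 / d * (w j * w 0) = -w j := by rw [mul_comm (w j), ← mul_assoc, key]; ring
      rw [this, hw]
      simp only [Pi.sub_apply, Pi.single_apply]
      split <;> simp_all <;> ring

lemma exists_unit_vector {n : ℕ} (hn : 0 < n) (S : Matrix (Fin n) (Fin n) ℝ)
    (hSymm : Sᵀ = S) (c : ℝ) (htr : S.trace = n * c) :
    ∃ v : Fin n → ℝ, v ⬝ᵥ v = 1 ∧ v ⬝ᵥ (S *ᵥ v) = c := by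
  have hne : Nonempty (Fin n) := ⟨⟨0, hn⟩⟩
  have htr' : ∑ i, S i i = n * c := by simpa [Matrix.trace, Matrix.diag] using htr
  by_cases he : ∃ i, S i i = c
  · obtain ⟨i, hi⟩ := he
    refine ⟨Pi.single i 1, by simp, ?_⟩
    rw [mulVec_single, single_dotProduct]
    simpa using hi
  · push_neg at he
    have hlt : ∃ i, S i i < c := by
      by_contra h
      push_neg at h
      have h' : ∀ i ∈ Finset.univ, c < S i i := fun i _ => lt_of_le_of_ne (h i) (Ne.symm (he i))
      have := Finset.sum_lt_sum_of_nonempty Finset.univ_nonempty h'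
      rw [Finset.sum_const, Finset.card_univ, Fintype.card_fin, nsmul_eq_mul, htr'] at this
      exact lt_irrefl _ this
    have hgt : ∃ j, c < S j j := by
      by_contra h
      push_neg at h
      have h' : ∀ i ∈ Finset.univ, S i i < c := fun i _ => lt_of_le_of_ne (h i) (he i)
      have := Finset.sum_lt_sum_of_nonempty Finset.univ_nonempty h'
      rw [htr', Finset.sum_const, Finset.card_univ, Fintype.card_fin, nsmul_eq_mul] at this
      exact lt_irrefl _ this
    obtain ⟨i, hi⟩ := hlt
    obtain ⟨j, hj⟩ := hgt
    have hij : i ≠ j := fun h => absurd (h ▸ hi) (not_lt.mpr (le_of_lt hj))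
    set g : ℝ → ℝ := fun t =>
      (Real.cos t)^2 * S i i + (Real.sin t)^2 * S j j + 2 * (Real.cos t * Real.sin t) * S i j
      with hg
    have hcont : ContinuousOn g (Set.Icc 0 (Real.pi/2)) := by fun_prop
    have h0 : g 0 = S i i := by simp [hg]
    have h1 : g (Real.pi/2) = S j j := by simp [hg]
    have hmem : c ∈ Set.Icc (g 0) (g (Real.pi/2)) := by
      rw [h0, h1]; exact ⟨le_of_lt hi, le_of_lt hj⟩
    obtain ⟨t, _, ht⟩ := intermediate_value_Icc (by positivity : (0:ℝ) ≤ Real.pi/2) hcont hmem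
    refine ⟨Real.cos t • (Pi.single i 1 : Fin n → ℝ) + Real.sin t • (Pi.single j 1 : Fin n → ℝ), ?_, ?_⟩
    · simp only [dotProduct_add, add_dotProduct, smul_dotProduct, dotProduct_smul,
        single_dotProduct, dotProduct_single, smul_eq_mul, Pi.single_apply]
      simp [hij, hij.symm]
      rw [← Real.sin_sq_add_cos_sq t]; ring
    · have hSji : S j i = S i j := by
        conv_lhs => rw [← hSymm]
        rfl
      simp only [mulVec_add, mulVec_smul, mulVec_single, dotProduct_add, add_dotProduct,
        smul_dotProduct, dotProduct_smul, single_dotProduct, dotProduct_single,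
        smul_eq_mul, mul_one, Pi.add_apply, Pi.smul_apply, Pi.single_apply]
      rw [← ht]
      simp [hg, hij, hij.symm, hSji]
      ring

lemma conj_apply {n : ℕ} (A M : Matrix (Fin n) (Fin n) ℝ) (i j : Fin n) :
    (Aᵀ * M * A) i j = ∑ k, ∑ l, A k i * M k l * A l j := by
  simp only [mul_apply, transpose_apply, Finset.sum_mul]
  rw [Finset.sum_comm]

lemma const_diag : ∀ (n : ℕ) (S : Matrix (Fin n) (Fin n) ℝ), Sᵀ = S →
    ∀ c : ℝ, S.trace = n * c →
    ∃ Q : Matrix (Fin n) (Fin n) ℝ, Qᵀ * Q = 1 ∧ ∀ i, (Qᵀ * S * Q) i i = c := by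
  intro n
  induction n with
  | zero => exact fun S _ c _ => ⟨1, by simp, fun i => i.elim0⟩
  | succ n ih =>
    intro S hSymm c htr
    obtain ⟨v, hv1, hvq⟩ := exists_unit_vector (Nat.succ_pos n) S hSymm c htr
    obtain ⟨Q₁, hQ₁, hcol⟩ := householder v hv1
    have hQ₁' : Q₁ * Q₁ᵀ = 1 := mul_eq_one_comm.mp hQ₁
    set M : Matrix (Fin (n+1)) (Fin (n+1)) ℝ := Q₁ᵀ * S * Q₁ with hM
    have hMsymm : Mᵀ = M := by
      rw [hM, transpose_mul, transpose_mul, transpose_transpose, hSymm, mul_assoc]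
    have hM00 : M 0 0 = c := by
      rw [hM, conj_apply, ← hvq]
      simp only [dotProduct, mulVec, dotProduct]
      rw [Finset.sum_congr rfl (fun k _ => Finset.mul_sum _ _ _)]
      exact Finset.sum_congr rfl fun k _ => Finset.sum_congr rfl fun l _ => by
        rw [hcol, hcol]; ring
    have hMtr : M.trace = S.trace := by
      rw [hM, Matrix.trace_mul_cycle, hQ₁', one_mul]
    set M' : Matrix (Fin n) (Fin n) ℝ := M.submatrix Fin.succ Fin.succ with hM'
    have hM'symm : M'ᵀ = M' := by
      ext i j
      simp only [hM', transpose_apply, submatrix_apply]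
      conv_lhs => rw [← hMsymm]
      rfl
    have hM'tr : M'.trace = n * c := by
      have h1 : M.trace = M 0 0 + M'.trace := by
        simp only [Matrix.trace, Matrix.diag, hM', submatrix_apply]
        exact Fin.sum_univ_succ _
      have h2 : ((n:ℝ) + 1) * c = M 0 0 + M'.trace := by
        rw [← h1, hMtr, htr]; push_cast; ring
      rw [hM00] at h2
      linarith
    obtain ⟨Q', hQ', hdiag'⟩ := ih M' hM'symm c hM'tr
    set P : Matrix (Fin (n+1)) (Fin (n+1)) ℝ := fun i =>
      Fin.cases (Pi.single 0 1) (fun i' j => Fin.cases 0 (fun j' => Q' i' j') j) i with hP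
    have hP00 : P 0 0 = 1 := by simp [hP]
    have hP0s : ∀ j : Fin n, P 0 j.succ = 0 := fun j => by
      simp [hP, Pi.single_apply, Fin.succ_ne_zero]
    have hPs0 : ∀ i : Fin n, P i.succ 0 = 0 := fun i => rfl
    have hPss : ∀ i j : Fin n, P i.succ j.succ = Q' i j := fun i j => rfl
    have hPtP : Pᵀ * P = 1 := by
      ext i j
      rw [mul_apply, Fin.sum_univ_succ]
      simp only [transpose_apply]
      induction i using Fin.cases with
      | zero =>
        induction j using Fin.cases with
        | zero => simp [hP00, hPs0]
        | succ j' => simp [hP00, hP0s, hPs0, one_apply, (Fin.succ_ne_zero j').symm]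
      | succ i' =>
        induction j using Fin.cases with
        | zero => simp [hP00, hP0s, hPs0, one_apply, Fin.succ_ne_zero i']
        | succ j' =>
          simp only [hP0s, hPss, zero_mul, mul_zero, zero_add]
          have := congrFun (congrFun hQ' i') j'
          rw [mul_apply] at this
          simp only [transpose_apply] at this
          rw [this]
          simp [one_apply, Fin.succ_inj]
    refine ⟨Q₁ * P, ?_, ?_⟩
    · rw [transpose_mul, mul_assoc, ← mul_assoc Q₁ᵀ, hQ₁, one_mul, hPtP]
    · intro i
      have hconj : (Q₁ * P)ᵀ * S * (Q₁ * P) = Pᵀ * M * P := by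
        rw [transpose_mul, hM]
        noncomm_ring
      rw [hconj]
      induction i using Fin.cases with
      | zero =>
        have inner : ∀ k, (∑ l, P k 0 * M k l * P l 0) = P k 0 * M k 0 := by
          intro k; rw [Fin.sum_univ_succ]; simp [hPs0, hP00]
        rw [conj_apply, Finset.sum_congr rfl fun k _ => inner k, Fin.sum_univ_succ]
        simp [hP00, hPs0, hM00]
      | succ i' =>
        have inner : ∀ k, (∑ l, P k i'.succ * M k l * P l i'.succ)
            = ∑ l', P k i'.succ * M k l'.succ * Q' l' i' := by
          intro k; rw [Fin.sum_univ_succ]; simp [hP0s, hPss]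
        rw [conj_apply, Finset.sum_congr rfl fun k _ => inner k, Fin.sum_univ_succ]
        simp only [hP0s, hPss, zero_mul, mul_zero, Finset.sum_const_zero, zero_add]
        have := hdiag' i'
        rw [conj_apply] at this
        rw [← this]
        exact Finset.sum_congr rfl fun k _ => Finset.sum_congr rfl fun l _ => by
          simp [hM']

/-- For `S` symmetric positive definite there is an antisymmetric `J̃` such
that the minimal real part of the spectrum of `S + J̃` equals `Tr(S)/N`. Moreover
`Tr(S)/N ≥ min σ(S)`, strictly if `S` has two different eigenvalues. -/
theorem exists_optimal_antisymmetric_perturbation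
    (N : ℕ) (hN : 1 ≤ N) (S : Matrix (Fin N) (Fin N) ℝ) (hS : S.PosDef) :
    (∃ J : Matrix (Fin N) (Fin N) ℝ, Jᵀ = -J ∧
      IsLeast {r : ℝ | ∃ μ ∈ spectrum ℂ ((S + J).map (Complex.ofReal)), μ.re = r}
        (S.trace / N)) ∧
    (∃ μ₀ : ℝ, IsLeast (spectrum ℝ S) μ₀ ∧ μ₀ ≤ S.trace / N ∧
      ((∃ a ∈ spectrum ℝ S, ∃ b ∈ spectrum ℝ S, a ≠ b) → μ₀ < S.trace / N)) := by
  have hNpos : (0:ℝ) < N := by exact_mod_cast hN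
  have hSymm : Sᵀ = S := by
    have h := hS.1
    rw [Matrix.IsHermitian] at h
    ext i j
    calc Sᵀ i j = Sᴴ i j := by simp [conjTranspose_apply]
    _ = S i j := by rw [h]
  set c : ℝ := S.trace / N with hc
  have htr : S.trace = N * c := by rw [hc, mul_div_assoc', mul_comm, mul_div_assoc, div_self hNpos.ne', mul_one]
  constructor
  · -- Part 1
    obtain ⟨Q, hQ, hdiag⟩ := const_diag N S hSymm c htr
    have hQ' : Q * Qᵀ = 1 := mul_eq_one_comm.mp hQ
    set M : Matrix (Fin N) (Fin N) ℝ := Qᵀ * S * Q with hM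
    have hMsymm : Mᵀ = M := by
      rw [hM, transpose_mul, transpose_mul, transpose_transpose, hSymm, mul_assoc]
    have hSM : S = Q * M * Qᵀ := by
      rw [hM]
      calc S = (Q * Qᵀ) * S * (Q * Qᵀ) := by rw [hQ', one_mul, mul_one]
      _ = Q * (Qᵀ * S * Q) * Qᵀ := by noncomm_ring
    set U : Matrix (Fin N) (Fin N) ℝ :=
      Matrix.of (fun i j => if i = j then c else if i < j then 2 * M i j else 0) with hU
    have hUsum : U + Uᵀ = M + M := by
      ext i j
      simp only [Matrix.add_apply, transpose_apply, hU, of_apply]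
      rcases lt_trichotomy i j with h | h | h
      · have h1 : i ≠ j := ne_of_lt h
        have h2 : ¬ j < i := not_lt.mpr (le_of_lt h)
        simp [h1, h1.symm, h, h2]
        ring
      · subst h
        simp only [lt_irrefl, if_true, if_neg (lt_irrefl i).elim]
        simp [hdiag i]
      · have h1 : i ≠ j := (ne_of_lt h).symm
        have h2 : ¬ i < j := not_lt.mpr (le_of_lt h)
        have hji : M j i = M i j := by simpa using congrFun (congrFun hMsymm i) j
        simp [h1, h1.symm, h, h2, hji]
        ring
    set A : Matrix (Fin N) (Fin N) ℝ := Q * U * Qᵀ with hA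
    have hAT : Aᵀ = Q * Uᵀ * Qᵀ := by
      rw [hA, transpose_mul, transpose_mul, transpose_transpose, mul_assoc]
    have hAsum : A + Aᵀ = S + S := by
      rw [hA, hAT]
      calc Q * U * Qᵀ + Q * Uᵀ * Qᵀ = Q * (U + Uᵀ) * Qᵀ := by noncomm_ring
      _ = Q * (M + M) * Qᵀ := by rw [hUsum]
      _ = Q * M * Qᵀ + Q * M * Qᵀ := by noncomm_ring
      _ = S + S := by rw [← hSM]
    refine ⟨A - S, ?_, ?_⟩
    · rw [transpose_sub, hSymm]
      have h3 : Aᵀ = S + S - A := by rw [← hAsum]; abel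
      rw [h3]; abel
    · have hSA : S + (A - S) = A := by abel
      rw [hSA]
      set f : ℝ →+* ℂ := Complex.ofRealHom with hf
      have hone : (1 : Matrix (Fin N) (Fin N) ℝ).map ⇑f = 1 :=
        Matrix.map_one ⇑f f.map_zero f.map_one
      have hq1 : Q.map ⇑f * (Q.map ⇑f)ᵀ = 1 := by
        rw [← Matrix.transpose_map, ← Matrix.map_mul, hQ', hone]
      have hq2 : (Q.map ⇑f)ᵀ * Q.map ⇑f = 1 := by
        rw [← Matrix.transpose_map, ← Matrix.map_mul, hQ, hone]
      set u : (Matrix (Fin N) (Fin N) ℂ)ˣ := ⟨Q.map ⇑f, (Q.map ⇑f)ᵀ, hq1, hq2⟩ with hu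
      have hAmap : A.map Complex.ofReal = (u : Matrix (Fin N) (Fin N) ℂ) * (U.map ⇑f) * ((u⁻¹ : (Matrix (Fin N) (Fin N) ℂ)ˣ) : Matrix (Fin N) (Fin N) ℂ) := by
        show A.map ⇑f = _
        rw [hA, Matrix.map_mul, Matrix.map_mul, Matrix.transpose_map]
        rfl
      have hspec : spectrum ℂ (A.map Complex.ofReal) = {(c : ℂ)} := by
        rw [hAmap, spectrum.units_conjugate]
        ext μ
        simp only [Set.mem_singleton_iff, spectrum.mem_iff]
        rw [Algebra.algebraMap_eq_smul_one]
        have hblock : (μ • (1 : Matrix (Fin N) (Fin N) ℂ) - U.map ⇑f).BlockTriangular id := by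
          intro i j hij
          have h1 : i ≠ j := (ne_of_lt hij).symm
          have h2 : ¬ i < j := not_lt.mpr (le_of_lt hij)
          simp [Matrix.smul_apply, Matrix.one_apply, Matrix.map_apply, hU, h1, h2]
        have hdiagZ : ∀ i, (μ • (1 : Matrix (Fin N) (Fin N) ℂ) - U.map ⇑f) i i = μ - c := by
          intro i
          simp [Matrix.smul_apply, Matrix.one_apply, Matrix.map_apply, hU, hf]
        have hdet : (μ • (1 : Matrix (Fin N) (Fin N) ℂ) - U.map ⇑f).det = (μ - c)^N := by
          rw [Matrix.det_of_upperTriangular hblock,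
            Finset.prod_congr rfl fun i _ => hdiagZ i, Finset.prod_const,
            Finset.card_univ, Fintype.card_fin]
        rw [Matrix.isUnit_iff_isUnit_det, hdet, isUnit_iff_ne_zero, not_not,
          pow_eq_zero_iff (Nat.one_le_iff_ne_zero.mp hN), sub_eq_zero]
      constructor
      · exact ⟨(c : ℂ), by rw [hspec]; exact Set.mem_singleton _, Complex.ofReal_re _⟩
      · rintro r ⟨μ, hμ, rfl⟩
        rw [hspec, Set.mem_singleton_iff] at hμ
        subst hμ
        simp
  · -- Part 2
    have hherm := hS.1
    set lam := hherm.eigenvalues with hlam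
    set V : Matrix (Fin N) (Fin N) ℝ := (hherm.eigenvectorUnitary : Matrix (Fin N) (Fin N) ℝ)
      with hV
    have hv1 : V * star V = 1 := (Matrix.mem_unitaryGroup_iff).mp (hherm.eigenvectorUnitary).2
    have hv2 : star V * V = 1 := (Matrix.mem_unitaryGroup_iff').mp (hherm.eigenvectorUnitary).2
    set v : (Matrix (Fin N) (Fin N) ℝ)ˣ := ⟨V, star V, hv1, hv2⟩ with hv
    have hrange : spectrum ℝ S = Set.range lam := by
      conv_lhs => rw [hherm.spectral_theorem, Unitary.conjStarAlgAut_apply]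
      have : V * diagonal (RCLike.ofReal ∘ lam) * star V
          = (v : Matrix (Fin N) (Fin N) ℝ) * diagonal (RCLike.ofReal ∘ lam)
            * ((v⁻¹ : (Matrix (Fin N) (Fin N) ℝ)ˣ) : Matrix (Fin N) (Fin N) ℝ) := rfl
      rw [this, spectrum.units_conjugate, spectrum_diagonal]
      simp [RCLike.ofReal_real_eq_id]
    have htr2 : S.trace = ∑ i, lam i := by
      conv_lhs => rw [hherm.spectral_theorem, Unitary.conjStarAlgAut_apply]
      rw [Matrix.trace_mul_cycle, hv2, one_mul, Matrix.trace_diagonal]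
      simp [RCLike.ofReal_real_eq_id, hlam]
    obtain ⟨i₀, -, hmin⟩ := Finset.exists_min_image Finset.univ lam ⟨⟨0, hN⟩, Finset.mem_univ _⟩
    have hconst : ∀ x : ℝ, (∑ _i : Fin N, x) = x * N := by
      intro x
      rw [Finset.sum_const, Finset.card_univ, Fintype.card_fin, nsmul_eq_mul]
      ring
    refine ⟨lam i₀, ⟨?_, ?_⟩, ?_, ?_⟩
    · rw [hrange]; exact ⟨i₀, rfl⟩
    · intro x hx
      rw [hrange] at hx
      obtain ⟨i, rfl⟩ := hx
      exact hmin i (Finset.mem_univ i)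
    · rw [hc, le_div_iff₀ hNpos, htr2, ← hconst (lam i₀)]
      exact Finset.sum_le_sum fun i _ => hmin i (Finset.mem_univ i)
    · rintro ⟨a, ha, b, hb, hab⟩
      rw [hrange] at ha hb
      obtain ⟨i, rfl⟩ := ha
      obtain ⟨j, rfl⟩ := hb
      have hex : ∃ k, lam i₀ < lam k := by
        by_contra h
        push_neg at h
        have hconst' : ∀ k, lam k = lam i₀ :=
          fun k => le_antisymm (h k) (hmin k (Finset.mem_univ k))
        exact hab (by rw [hconst' i, hconst' j])
      obtain ⟨k, hk⟩ := hex
      rw [hc, lt_div_iff₀ hNpos, htr2, ← hconst (lam i₀)]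
      exact Finset.sum_lt_sum (fun i _ => hmin i (Finset.mem_univ i))
        ⟨k, Finset.mem_univ k, hk⟩
end

section
/- Let S, Q be N×N real symmetric positive definite matrices and J̃ an N×N real antisymmetric matrix satisfying J̃Q − QJ̃ = −QS − SQ + (2·Tr(S)/N)·Q, and let J = S^{−1/2}·J̃·S^{−1/2} where S^{1/2} is the positive definite square root of S. Then for every t ≥ 0: ‖exp(−(S + J̃)·t)‖ ≤ κ(Q)^{1/2}·exp(−(Tr(S)/N)·t) and ‖exp(−(I + J)·S·t)‖ ≤ κ(Q⁻¹S)^{1/2}·exp(−(Tr(S)/N)·t). -/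
open Matrix
open scoped Matrix.Norms.L2Operator

open scoped ComplexOrder in
/-- The square root of a positive semidefinite matrix, as defined in the older Mathlib. -/
noncomputable def Matrix.PosSemidef.sqrt {n 𝕜 : Type*} [Fintype n] [RCLike 𝕜] [DecidableEq n]
    {A : Matrix n n 𝕜} (hA : PosSemidef A) : Matrix n n 𝕜 :=
  hA.1.eigenvectorUnitary.1 * diagonal ((↑) ∘ (√·) ∘ hA.1.eigenvalues) *
  (star hA.1.eigenvectorUnitary : Matrix n n 𝕜)

open scoped ComplexOrder in
lemma Matrix.PosSemidef.posSemidef_sqrt {n 𝕜 : Type*} [Fintype n] [RCLike 𝕜] [DecidableEq n]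
    {A : Matrix n n 𝕜} (hA : PosSemidef A) : hA.sqrt.PosSemidef := by
  have hD : (diagonal (((↑) ∘ (√·) ∘ hA.1.eigenvalues : n → 𝕜))).PosSemidef :=
    posSemidef_diagonal_iff.mpr fun i => RCLike.ofReal_nonneg.mpr (Real.sqrt_nonneg _)
  have := hD.mul_mul_conjTranspose_same (hA.1.eigenvectorUnitary : Matrix n n 𝕜)
  rwa [← star_eq_conjTranspose] at this

open scoped ComplexOrder in
lemma Matrix.PosSemidef.sqrt_mul_self {n 𝕜 : Type*} [Fintype n] [RCLike 𝕜] [DecidableEq n]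
    {A : Matrix n n 𝕜} (hA : PosSemidef A) : hA.sqrt * hA.sqrt = A := by
  have hU : (star hA.1.eigenvectorUnitary : Matrix n n 𝕜) * hA.1.eigenvectorUnitary = 1 :=
    Unitary.coe_star_mul_self _
  conv_rhs => rw [hA.1.spectral_theorem]
  simp only [sqrt, Unitary.conjStarAlgAut_apply]
  set U : Matrix n n 𝕜 := hA.1.eigenvectorUnitary.1
  set D := diagonal (((↑) ∘ (√·) ∘ hA.1.eigenvalues : n → 𝕜))
  have e : U * D * star U * (U * D * star U) = U * (D * (star U * U) * D) * star U := by
    simp only [Matrix.mul_assoc]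
  rw [e, hU, Matrix.mul_one, diagonal_mul_diagonal]
  refine congrArg (fun d => U * diagonal d * star U) ?_
  funext i
  simp only [Function.comp_apply]
  rw [← RCLike.ofReal_mul, Real.mul_self_sqrt (hA.eigenvalues_nonneg i)]

section Aux

open NormedSpace
open scoped RealInnerProductSpace

variable {N : ℕ}

/-- dot product as inner product on Euclidean space -/
private lemma aux_inner_eq (x y : EuclideanSpace ℝ (Fin N)) :
    ⟪x, y⟫ = (x : Fin N → ℝ) ⬝ᵥ (y : Fin N → ℝ) := by
  simp [PiLp.inner_apply, dotProduct, mul_comm]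

private lemma aux_quad_upper (P : Matrix (Fin N) (Fin N) ℝ) (x : EuclideanSpace ℝ (Fin N)) :
    (x : Fin N → ℝ) ⬝ᵥ (P *ᵥ x) ≤ ‖P‖ * ‖x‖ ^ 2 := by
  have h0 : (x : Fin N → ℝ) ⬝ᵥ (P *ᵥ x)
      = ⟪x, (EuclideanSpace.equiv (Fin N) ℝ).symm (P *ᵥ x)⟫ := by
    rw [aux_inner_eq]; rfl
  rw [h0]
  calc ⟪x, (EuclideanSpace.equiv (Fin N) ℝ).symm (P *ᵥ x)⟫
      ≤ ‖x‖ * ‖(EuclideanSpace.equiv (Fin N) ℝ).symm (P *ᵥ x)‖ := real_inner_le_norm _ _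
    _ ≤ ‖P‖ * ‖x‖ ^ 2 := by
        have := Matrix.l2_opNorm_mulVec P x
        have hx := norm_nonneg x
        nlinarith [norm_nonneg ((EuclideanSpace.equiv (Fin N) ℝ).symm (P *ᵥ x))]

private lemma aux_opNorm_le (M : Matrix (Fin N) (Fin N) ℝ) {C : ℝ} (hC : 0 ≤ C)
    (h : ∀ x : EuclideanSpace ℝ (Fin N),
      ‖(EuclideanSpace.equiv (Fin N) ℝ).symm (M *ᵥ x)‖ ≤ C * ‖x‖) : ‖M‖ ≤ C := by
  rw [Matrix.l2_opNorm_def]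
  exact ContinuousLinearMap.opNorm_le_bound _ hC h

private lemma aux_posDef_of_det {A : Matrix (Fin N) (Fin N) ℝ} (hpsd : A.PosSemidef)
    (hdet : A.det ≠ 0) : A.PosDef := by
  exact hpsd.posDef_iff_det_ne_zero.mpr hdet

private lemma aux_sqrt_posDef {S : Matrix (Fin N) (Fin N) ℝ} (hS : S.PosDef) :
    (hS.posSemidef.sqrt).PosDef := by
  set R := hS.posSemidef.sqrt with hRdef
  have hpsd := hS.posSemidef.posSemidef_sqrt
  have hmul : R * R = S := hS.posSemidef.sqrt_mul_self
  refine aux_posDef_of_det hpsd fun h => ?_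
  have : S.det = 0 := by rw [← hmul, Matrix.det_mul, h, zero_mul]
  exact hS.det_pos.ne' this

private lemma aux_quad_lower {P : Matrix (Fin N) (Fin N) ℝ} (hP : P.PosDef)
    (x : EuclideanSpace ℝ (Fin N)) :
    ‖x‖ ^ 2 ≤ ‖P⁻¹‖ * ((x : Fin N → ℝ) ⬝ᵥ (P *ᵥ x)) := by
  set R := hP.posSemidef.sqrt with hRdef
  have hR : R.PosDef := aux_sqrt_posDef hP
  have hRsymm : Rᵀ = R := by
    simpa [Matrix.conjTranspose_eq_transpose_of_trivial] using hR.isHermitian.eq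
  have hmul : R * R = P := hP.posSemidef.sqrt_mul_self
  have hRdet : IsUnit R.det := hR.det_pos.ne'.isUnit
  have hinv : R⁻¹ * R = 1 := Matrix.nonsing_inv_mul R hRdet
  set z : EuclideanSpace ℝ (Fin N) := (EuclideanSpace.equiv (Fin N) ℝ).symm (R *ᵥ x) with hz
  have hxz : (x : Fin N → ℝ) = R⁻¹ *ᵥ (z : Fin N → ℝ) := by
    show (x : Fin N → ℝ) = R⁻¹ *ᵥ (R *ᵥ x)
    rw [Matrix.mulVec_mulVec, hinv, Matrix.one_mulVec]
  have hPinv : P⁻¹ = R⁻¹ * R⁻¹ := by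
    rw [← hmul, Matrix.mul_inv_rev]
  have hRinvT : (R⁻¹)ᵀ = R⁻¹ := by rw [Matrix.transpose_nonsing_inv, hRsymm]
  have h1 : ‖x‖ ^ 2 = (z : Fin N → ℝ) ⬝ᵥ (P⁻¹ *ᵥ z) := by
    rw [← real_inner_self_eq_norm_sq, aux_inner_eq, hxz]
    rw [Matrix.dotProduct_mulVec, ← Matrix.mulVec_transpose, hRinvT,
      Matrix.mulVec_mulVec, ← hPinv, dotProduct_comm]
  have h2 : (z : Fin N → ℝ) ⬝ᵥ (P⁻¹ *ᵥ z) ≤ ‖P⁻¹‖ * ‖z‖ ^ 2 := aux_quad_upper P⁻¹ z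
  have h3 : ‖z‖ ^ 2 = (x : Fin N → ℝ) ⬝ᵥ (P *ᵥ x) := by
    rw [← real_inner_self_eq_norm_sq, aux_inner_eq]
    show (R *ᵥ x) ⬝ᵥ (R *ᵥ x) = _
    rw [Matrix.dotProduct_mulVec, ← Matrix.mulVec_transpose, hRsymm,
      Matrix.mulVec_mulVec, hmul, dotProduct_comm]
  rw [h1, ← h3]
  exact h2

private lemma aux_norm_le_of_quad {P M : Matrix (Fin N) (Fin N) ℝ} (hP : P.PosDef) {c : ℝ}
    (hc : 0 ≤ c) (hM : Mᵀ * P * M = (c ^ 2) • P) :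
    ‖M‖ ≤ Real.sqrt (‖P⁻¹‖ * ‖P‖) * c := by
  have hPinv_nonneg : (0:ℝ) ≤ ‖P⁻¹‖ := norm_nonneg _
  have hPn : (0:ℝ) ≤ ‖P‖ := norm_nonneg _
  apply aux_opNorm_le M (by positivity)
  intro x
  set y : EuclideanSpace ℝ (Fin N) := (EuclideanSpace.equiv (Fin N) ℝ).symm (M *ᵥ x) with hy
  have key : ‖y‖ ^ 2 ≤ (‖P⁻¹‖ * ‖P‖) * c ^ 2 * ‖x‖ ^ 2 := by
    have h1 : ‖y‖ ^ 2 ≤ ‖P⁻¹‖ * ((y : Fin N → ℝ) ⬝ᵥ (P *ᵥ y)) := aux_quad_lower hP y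
    have h2 : (y : Fin N → ℝ) ⬝ᵥ (P *ᵥ y) = c ^ 2 * ((x : Fin N → ℝ) ⬝ᵥ (P *ᵥ x)) := by
      show (M *ᵥ x) ⬝ᵥ (P *ᵥ (M *ᵥ x)) = _
      have hPsymm : Pᵀ = P := by
        simpa [Matrix.conjTranspose_eq_transpose_of_trivial] using hP.isHermitian.eq
      rw [Matrix.mulVec_mulVec, Matrix.dotProduct_mulVec, ← Matrix.mulVec_transpose,
        Matrix.mulVec_mulVec, Matrix.transpose_mul, hPsymm, hM, Matrix.smul_mulVec,
        smul_dotProduct, dotProduct_comm]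
      simp [smul_eq_mul]
    have h3 : (x : Fin N → ℝ) ⬝ᵥ (P *ᵥ x) ≤ ‖P‖ * ‖x‖ ^ 2 := aux_quad_upper P x
    calc ‖y‖ ^ 2 ≤ ‖P⁻¹‖ * (c ^ 2 * ((x : Fin N → ℝ) ⬝ᵥ (P *ᵥ x))) := by rw [← h2]; exact h1
      _ ≤ ‖P⁻¹‖ * (c ^ 2 * (‖P‖ * ‖x‖ ^ 2)) := by
          exact mul_le_mul_of_nonneg_left
            (mul_le_mul_of_nonneg_left h3 (sq_nonneg c)) hPinv_nonneg
      _ = (‖P⁻¹‖ * ‖P‖) * c ^ 2 * ‖x‖ ^ 2 := by ring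
  have hnn : (0:ℝ) ≤ Real.sqrt (‖P⁻¹‖ * ‖P‖) * c * ‖x‖ := by positivity
  have hsq : (Real.sqrt (‖P⁻¹‖ * ‖P‖) * c * ‖x‖) ^ 2 = ‖P⁻¹‖ * ‖P‖ * c ^ 2 * ‖x‖ ^ 2 := by
    rw [mul_pow, mul_pow, Real.sq_sqrt (by positivity)]
  refine (pow_le_pow_iff_left₀ (norm_nonneg y) hnn (two_ne_zero)).mp ?_
  rw [hsq]
  calc ‖y‖ ^ 2 ≤ (‖P⁻¹‖ * ‖P‖) * c ^ 2 * ‖x‖ ^ 2 := key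
    _ = ‖P⁻¹‖ * ‖P‖ * c ^ 2 * ‖x‖ ^ 2 := by ring

private lemma aux_exp_smul_one (c : ℝ) :
    exp (c • (1 : Matrix (Fin N) (Fin N) ℝ)) = Real.exp c • 1 := by
  have h := algebraMap_exp_comm (𝕂 := ℝ) (𝔸 := Matrix (Fin N) (Fin N) ℝ) c
  rw [Algebra.algebraMap_eq_smul_one, Algebra.algebraMap_eq_smul_one] at h
  rw [← h, Real.exp_eq_exp_ℝ]

private lemma aux_exp_ident {A P : Matrix (Fin N) (Fin N) ℝ} (hP : IsUnit P.det)
    {c : ℝ} (h : Aᵀ * P + P * A = (2 * c) • P) (t : ℝ) :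
    (exp (-(t • A)))ᵀ * P * exp (-(t • A)) = Real.exp (-(2 * c * t)) • P := by
  have hPinv : P * P⁻¹ = 1 := Matrix.mul_nonsing_inv P hP
  have hconj : P * A * P⁻¹ = (2 * c) • (1 : Matrix (Fin N) (Fin N) ℝ) - Aᵀ := by
    have h1 : P * A = (2 * c) • P - Aᵀ * P := by
      rw [← h]; abel
    calc P * A * P⁻¹ = ((2 * c) • P - Aᵀ * P) * P⁻¹ := by rw [h1]
      _ = (2 * c) • (P * P⁻¹) - Aᵀ * (P * P⁻¹) := by
          rw [Matrix.sub_mul, Matrix.smul_mul, Matrix.mul_assoc]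
      _ = (2 * c) • (1 : Matrix (Fin N) (Fin N) ℝ) - Aᵀ := by rw [hPinv, Matrix.mul_one]
  have hexpconj : P * exp (-(t • A)) * P⁻¹ = exp (P * (-(t • A)) * P⁻¹) := by
    rw [Matrix.exp_conj P (-(t • A)) (Matrix.isUnit_iff_isUnit_det P |>.mpr hP)]
  have harg : P * (-(t • A)) * P⁻¹
      = (-(2 * c * t)) • (1 : Matrix (Fin N) (Fin N) ℝ) + t • Aᵀ := by
    have h0 : P * (-(t • A)) * P⁻¹ = -(t • (P * A * P⁻¹)) := by
      simp only [Matrix.mul_neg, Matrix.neg_mul, Matrix.mul_smul, Matrix.smul_mul, neg_smul]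
    rw [h0, hconj, smul_sub]
    module
  have hcomm : Commute ((-(2 * c * t)) • (1 : Matrix (Fin N) (Fin N) ℝ)) (t • Aᵀ) :=
    (Commute.one_left _).smul_left _ |>.smul_right _
  have hsplit : P * exp (-(t • A)) * P⁻¹
      = Real.exp (-(2 * c * t)) • exp (t • Aᵀ) := by
    rw [hexpconj, harg, Matrix.exp_add_of_commute _ _ hcomm, aux_exp_smul_one]
    rw [Matrix.smul_mul, Matrix.one_mul]
  have hmain : P * exp (-(t • A)) = Real.exp (-(2 * c * t)) • (exp (t • Aᵀ) * P) := by
    have := congrArg (fun X => X * P) hsplit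
    simpa [Matrix.mul_assoc, Matrix.nonsing_inv_mul P hP, Matrix.mul_one,
      Matrix.smul_mul] using this
  have htrans : (exp (-(t • A)))ᵀ = exp (-(t • Aᵀ)) := by
    rw [← Matrix.exp_transpose, Matrix.transpose_neg, Matrix.transpose_smul]
  have hcancel : exp (-(t • Aᵀ)) * exp (t • Aᵀ) = 1 := by
    rw [← Matrix.exp_add_of_commute _ _ ((Commute.refl (t • Aᵀ)).neg_left), neg_add_cancel,
      exp_zero]
  rw [Matrix.mul_assoc, hmain, htrans, Matrix.mul_smul, ← Matrix.mul_assoc, hcancel,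
    Matrix.one_mul]

/-- the main Lyapunov-type semigroup bound -/
private lemma aux_semigroup_bound {A P : Matrix (Fin N) (Fin N) ℝ} (hP : P.PosDef) {c : ℝ}
    (h : Aᵀ * P + P * A = (2 * c) • P) (t : ℝ) :
    ‖exp (-(t • A))‖ ≤ Real.sqrt (‖P⁻¹‖ * ‖P‖) * Real.exp (-(c * t)) := by
  have hdet : IsUnit P.det := hP.det_pos.ne'.isUnit
  have hident := aux_exp_ident hdet h t
  have hsq : Real.exp (-(2 * c * t)) = (Real.exp (-(c * t))) ^ 2 := by
    rw [sq, ← Real.exp_add]; ring_nf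
  rw [hsq] at hident
  exact aux_norm_le_of_quad hP (Real.exp_nonneg _) hident

private lemma aux_norm_pow_symm {P : Matrix (Fin N) (Fin N) ℝ} (hP : Pᵀ = P) (k : ℕ) :
    ‖P ^ (2 ^ k)‖ = ‖P‖ ^ (2 ^ k) := by
  induction k with
  | zero => simp
  | succ k ih =>
    have hPk : (P ^ (2 ^ k))ᴴ = P ^ (2 ^ k) := by
      rw [Matrix.conjTranspose_eq_transpose_of_trivial, Matrix.transpose_pow, hP]
    have h2 : P ^ (2 ^ (k + 1)) = (P ^ (2 ^ k))ᴴ * P ^ (2 ^ k) := by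
      rw [hPk, ← pow_add, pow_succ, mul_two]
    rw [h2, Matrix.l2_opNorm_conjTranspose_mul_self, ih, ← pow_add, pow_succ, mul_two]

private lemma aux_conj_pow {M R : Matrix (Fin N) (Fin N) ℝ} (hR : R⁻¹ * R = 1) (n : ℕ)
    (hn : 1 ≤ n) : (R * M * R⁻¹) ^ n = R * M ^ n * R⁻¹ := by
  induction n with
  | zero => omega
  | succ n ih =>
    rcases Nat.eq_or_lt_of_le hn with h | h
    · simp [← h]
    · have hn' : 1 ≤ n := by omega
      rw [pow_succ, ih hn', pow_succ]
      calc R * M ^ n * R⁻¹ * (R * M * R⁻¹)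
          = R * M ^ n * (R⁻¹ * R) * M * R⁻¹ := by
            simp only [Matrix.mul_assoc]
        _ = R * (M ^ n * M) * R⁻¹ := by rw [hR]; simp only [Matrix.mul_assoc, Matrix.mul_one]

/-- Gelfand-type argument: a symmetric matrix similar to `M` has norm at most `‖M‖`. -/
private lemma aux_norm_le_of_similar {P M R : Matrix (Fin N) (Fin N) ℝ} (hP : Pᵀ = P)
    (hR : R⁻¹ * R = 1) (hsim : P = R * M * R⁻¹) : ‖P‖ ≤ ‖M‖ := by
  have hMn : (0:ℝ) ≤ ‖M‖ := norm_nonneg _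
  have key : ∀ k : ℕ, ‖P‖ ^ (2 ^ k) ≤ (‖R‖ * ‖R⁻¹‖) * ‖M‖ ^ (2 ^ k) := by
    intro k
    have hpow : P ^ (2 ^ k) = R * M ^ (2 ^ k) * R⁻¹ := by
      rw [hsim, aux_conj_pow hR _ (Nat.one_le_two_pow)]
    calc ‖P‖ ^ (2 ^ k) = ‖P ^ (2 ^ k)‖ := (aux_norm_pow_symm hP k).symm
      _ = ‖R * M ^ (2 ^ k) * R⁻¹‖ := by rw [hpow]
      _ ≤ ‖R * M ^ (2 ^ k)‖ * ‖R⁻¹‖ := norm_mul_le _ _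
      _ ≤ ‖R‖ * ‖M ^ (2 ^ k)‖ * ‖R⁻¹‖ :=
          mul_le_mul_of_nonneg_right (norm_mul_le R (M ^ (2 ^ k))) (norm_nonneg _)
      _ ≤ ‖R‖ * ‖M‖ ^ (2 ^ k) * ‖R⁻¹‖ := by
          have hbound : ‖M ^ (2 ^ k)‖ ≤ ‖M‖ ^ (2 ^ k) :=
            norm_pow_le' M (Nat.pos_of_ne_zero (by positivity))
          exact mul_le_mul_of_nonneg_right
            (mul_le_mul_of_nonneg_left hbound (norm_nonneg R)) (norm_nonneg _)
      _ = (‖R‖ * ‖R⁻¹‖) * ‖M‖ ^ (2 ^ k) := by ring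
  by_contra hlt
  push_neg at hlt
  have hMpos : 0 < ‖P‖ := lt_of_le_of_lt hMn hlt
  by_cases hM0 : ‖M‖ = 0
  · have h0 := key 0
    simp only [pow_zero, pow_one, hM0, mul_zero, zero_pow, one_ne_zero,
      not_false_iff] at h0
    linarith
  · have hMpos' : 0 < ‖M‖ := lt_of_le_of_ne hMn (Ne.symm hM0)
    have hr1 : 1 < ‖P‖ / ‖M‖ := (one_lt_div hMpos').mpr hlt
    obtain ⟨k, hk⟩ := pow_unbounded_of_one_lt (‖R‖ * ‖R⁻¹‖) hr1
    have h2k : (‖P‖ / ‖M‖) ^ k ≤ (‖P‖ / ‖M‖) ^ (2 ^ k) :=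
      pow_le_pow_right₀ hr1.le (Nat.lt_two_pow_self (n := k)).le
    have hratio : (‖P‖ / ‖M‖) ^ (2 ^ k) ≤ ‖R‖ * ‖R⁻¹‖ := by
      rw [div_pow, div_le_iff₀ (by positivity)]
      calc ‖P‖ ^ (2 ^ k) ≤ (‖R‖ * ‖R⁻¹‖) * ‖M‖ ^ (2 ^ k) := key k
        _ = ‖R‖ * ‖R⁻¹‖ * ‖M‖ ^ (2 ^ k) := by ring
    linarith

end Aux

/-- For `(J̃, Q)` satisfying `J̃Q - QJ̃ = -QS - SQ + (2Tr(S)/N)Q` and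
`J = S^{-1/2} J̃ S^{-1/2}`, one has for all `t ≥ 0` the semigroup bounds
`‖exp(-(S+J̃)t)‖ ≤ κ(Q)^{1/2} e^{-(Tr(S)/N)t}` and
`‖exp(-(I+J)St)‖ ≤ κ(Q⁻¹S)^{1/2} e^{-(Tr(S)/N)t}` (operator norms induced by the
Euclidean norm, `κ(M) = ‖M‖·‖M⁻¹‖`). -/
theorem semigroup_decay_opt
    (N : ℕ) (hN : 1 ≤ N) (S Q J' : Matrix (Fin N) (Fin N) ℝ)
    (hS : S.PosDef) (hQ : Q.PosDef) (hJ' : J'ᵀ = -J')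
    (heq : J' * Q - Q * J' = -(Q * S) - S * Q + (2 * S.trace / N) • Q)
    (J : Matrix (Fin N) (Fin N) ℝ)
    (hJdef : J = (hS.posSemidef.sqrt)⁻¹ * J' * (hS.posSemidef.sqrt)⁻¹) :
    ∀ t : ℝ, 0 ≤ t →
      ‖NormedSpace.exp (-(t • (S + J')))‖ ≤
          Real.sqrt (‖Q‖ * ‖Q⁻¹‖) * Real.exp (-(S.trace / N) * t) ∧
      ‖NormedSpace.exp (-(t • ((1 + J) * S)))‖ ≤
          Real.sqrt (‖Q⁻¹ * S‖ * ‖(Q⁻¹ * S)⁻¹‖) * Real.exp (-(S.trace / N) * t) := by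
  intro t ht
  set μ : ℝ := S.trace / N with hμ
  set A : Matrix (Fin N) (Fin N) ℝ := S + J' with hA
  have hSsymm : Sᵀ = S := by
    simpa [Matrix.conjTranspose_eq_transpose_of_trivial] using hS.isHermitian.eq
  have hQdet : IsUnit Q.det := hQ.det_pos.ne'.isUnit
  have hQQi : Q * Q⁻¹ = 1 := Matrix.mul_nonsing_inv Q hQdet
  have hQiQ : Q⁻¹ * Q = 1 := Matrix.nonsing_inv_mul Q hQdet
  have hAT : Aᵀ = S - J' := by
    rw [hA, Matrix.transpose_add, hSsymm, hJ', sub_eq_add_neg]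
  -- Lyapunov identity for A and Q
  have hL : A * Q + Q * Aᵀ = (2 * μ) • Q := by
    have hexp : A * Q + Q * Aᵀ = (J' * Q - Q * J') + (S * Q + Q * S) := by
      rw [hAT, hA, Matrix.add_mul, Matrix.mul_sub]
      abel
    rw [hexp, heq]
    have hc : (2 * S.trace / N : ℝ) = 2 * μ := by
      rw [hμ]; ring
    rw [hc]
    abel
  -- Lyapunov identity for A and Q⁻¹
  have hLyap : Aᵀ * Q⁻¹ + Q⁻¹ * A = (2 * μ) • Q⁻¹ := by
    have h1 : Q⁻¹ * ((A * Q + Q * Aᵀ) * Q⁻¹) = Q⁻¹ * (((2 * μ) • Q) * Q⁻¹) := by rw [hL]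
    have e1 : Q⁻¹ * ((A * Q + Q * Aᵀ) * Q⁻¹) = Q⁻¹ * A + Aᵀ * Q⁻¹ := by
      rw [Matrix.add_mul, Matrix.mul_add]
      congr 1
      · rw [Matrix.mul_assoc A Q Q⁻¹, hQQi, Matrix.mul_one]
      · rw [← Matrix.mul_assoc, ← Matrix.mul_assoc, hQiQ, Matrix.one_mul]
    have e2 : Q⁻¹ * (((2 * μ) • Q) * Q⁻¹) = (2 * μ) • Q⁻¹ := by
      rw [Matrix.smul_mul, Matrix.mul_smul, hQQi, Matrix.mul_one]
    rw [e1, e2] at h1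
    rw [← h1]
    abel
  have hQinvPD : (Q⁻¹).PosDef := hQ.inv
  -- First bound
  have bound1 : ‖NormedSpace.exp (-(t • A))‖ ≤
      Real.sqrt (‖Q‖ * ‖Q⁻¹‖) * Real.exp (-(μ * t)) := by
    have h := aux_semigroup_bound hQinvPD hLyap t
    rwa [Matrix.nonsing_inv_nonsing_inv Q hQdet] at h
  constructor
  · have : Real.exp (-(μ * t)) = Real.exp (-(S.trace / N) * t) := by
      rw [hμ]; ring_nf
    rw [← this]
    exact bound1
  -- Second bound
  · set R : Matrix (Fin N) (Fin N) ℝ := hS.posSemidef.sqrt with hRdef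
    have hR : R.PosDef := aux_sqrt_posDef hS
    have hRsymm : Rᵀ = R := by
      simpa [Matrix.conjTranspose_eq_transpose_of_trivial] using hR.isHermitian.eq
    have hRR : R * R = S := hS.posSemidef.sqrt_mul_self
    have hRdet : IsUnit R.det := hR.det_pos.ne'.isUnit
    have hRiR : R⁻¹ * R = 1 := Matrix.nonsing_inv_mul R hRdet
    have hRRi : R * R⁻¹ = 1 := Matrix.mul_nonsing_inv R hRdet
    have hRinvT : (R⁻¹)ᵀ = R⁻¹ := by rw [Matrix.transpose_nonsing_inv, hRsymm]
    set B : Matrix (Fin N) (Fin N) ℝ := (1 + J) * S with hB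
    have claim1 : R⁻¹ * S * R = S := by
      rw [← hRR]
      simp only [Matrix.mul_assoc]
      rw [Matrix.nonsing_inv_mul_cancel_left R _ hRdet]
    have claim2 : (R⁻¹ * J' * R⁻¹) * S = R⁻¹ * (J' * R) := by
      rw [← hRR]
      simp only [Matrix.mul_assoc]
      rw [Matrix.nonsing_inv_mul_cancel_left R R hRdet]
    have hBeq : B = R⁻¹ * A * R := by
      calc B = S + J * S := by rw [hB, Matrix.add_mul, Matrix.one_mul]
        _ = S + R⁻¹ * (J' * R) := by rw [hJdef, claim2]
        _ = R⁻¹ * S * R + R⁻¹ * (J' * R) := by rw [claim1]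
        _ = R⁻¹ * A * R := by
            rw [hA, Matrix.mul_add, Matrix.add_mul]
            simp only [Matrix.mul_assoc]
    set P' : Matrix (Fin N) (Fin N) ℝ := R * Q⁻¹ * R with hP'def
    have hP'psd : P'.PosSemidef := by
      have h := hQinvPD.posSemidef.conjTranspose_mul_mul_same R
      have hRH : Rᴴ = R := by rw [Matrix.conjTranspose_eq_transpose_of_trivial, hRsymm]
      rwa [hRH] at h
    have hP' : P'.PosDef := by
      refine aux_posDef_of_det hP'psd ?_
      rw [hP'def, Matrix.det_mul, Matrix.det_mul]
      have hQidet : Q⁻¹.det ≠ 0 := hQinvPD.det_pos.ne'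
      have hRd : R.det ≠ 0 := hR.det_pos.ne'
      positivity
    have hBT : Bᵀ = R * Aᵀ * R⁻¹ := by
      rw [hBeq, Matrix.transpose_mul, Matrix.transpose_mul, hRsymm, hRinvT]
      simp only [Matrix.mul_assoc]
    -- Lyapunov for B and P'
    have hLyap' : Bᵀ * P' + P' * B = (2 * μ) • P' := by
      have e1 : Bᵀ * P' = R * (Aᵀ * Q⁻¹) * R := by
        rw [hBT, hP'def]
        simp only [Matrix.mul_assoc]
        rw [Matrix.nonsing_inv_mul_cancel_left R _ hRdet]
      have e2 : P' * B = R * (Q⁻¹ * A) * R := by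
        rw [hBeq, hP'def]
        simp only [Matrix.mul_assoc]
        rw [Matrix.mul_nonsing_inv_cancel_left R _ hRdet]
      rw [e1, e2, hP'def]
      have : R * (Aᵀ * Q⁻¹) * R + R * (Q⁻¹ * A) * R = R * (Aᵀ * Q⁻¹ + Q⁻¹ * A) * R := by
        noncomm_ring
      rw [this, hLyap]
      rw [Matrix.mul_smul, Matrix.smul_mul]
    have bound2 := aux_semigroup_bound hP' hLyap' t
    -- compare constants
    have hP'symm : P'ᵀ = P' := by
      simpa [Matrix.conjTranspose_eq_transpose_of_trivial] using hP'.isHermitian.eq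
    have hP'invsymm : (P'⁻¹)ᵀ = P'⁻¹ := by rw [Matrix.transpose_nonsing_inv, hP'symm]
    have hsim1 : P' = R * (Q⁻¹ * S) * R⁻¹ := by
      rw [hP'def, ← hRR]
      simp only [Matrix.mul_assoc, hRRi, Matrix.mul_one]
    have h1 : ‖P'‖ ≤ ‖Q⁻¹ * S‖ := aux_norm_le_of_similar hP'symm hRiR hsim1
    have hsim2 : P'⁻¹ = R * ((Q⁻¹ * S)⁻¹) * R⁻¹ := by
      have hQiSi : (Q⁻¹ * S)⁻¹ = S⁻¹ * Q := by
        rw [Matrix.mul_inv_rev, Matrix.nonsing_inv_nonsing_inv Q hQdet]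
      have hSi : S⁻¹ = R⁻¹ * R⁻¹ := by rw [← hRR, Matrix.mul_inv_rev]
      have hP'i : P'⁻¹ = R⁻¹ * Q * R⁻¹ := by
        rw [hP'def, Matrix.mul_inv_rev, Matrix.mul_inv_rev,
          Matrix.nonsing_inv_nonsing_inv Q hQdet, Matrix.mul_assoc]
      rw [hP'i, hQiSi, hSi]
      calc R⁻¹ * Q * R⁻¹ = (R * R⁻¹) * R⁻¹ * Q * R⁻¹ := by rw [hRRi, Matrix.one_mul]
        _ = R * (R⁻¹ * R⁻¹ * Q) * R⁻¹ := by simp only [Matrix.mul_assoc]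
    have h2 : ‖P'⁻¹‖ ≤ ‖(Q⁻¹ * S)⁻¹‖ := aux_norm_le_of_similar hP'invsymm hRiR hsim2
    have hc : Real.sqrt (‖P'⁻¹‖ * ‖P'‖) ≤ Real.sqrt (‖Q⁻¹ * S‖ * ‖(Q⁻¹ * S)⁻¹‖) := by
      apply Real.sqrt_le_sqrt
      rw [mul_comm (‖Q⁻¹ * S‖)]
      exact mul_le_mul h2 h1 (norm_nonneg _) (norm_nonneg _)
    have : Real.exp (-(μ * t)) = Real.exp (-(S.trace / N) * t) := by
      rw [hμ]; ring_nf
    calc ‖NormedSpace.exp (-(t • B))‖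
        ≤ Real.sqrt (‖P'⁻¹‖ * ‖P'‖) * Real.exp (-(μ * t)) := bound2
      _ ≤ Real.sqrt (‖Q⁻¹ * S‖ * ‖(Q⁻¹ * S)⁻¹‖) * Real.exp (-(μ * t)) :=
          mul_le_mul_of_nonneg_right hc (Real.exp_nonneg _)
      _ = Real.sqrt (‖Q⁻¹ * S‖ * ‖(Q⁻¹ * S)⁻¹‖) * Real.exp (-(S.trace / N) * t) := by
          rw [this]
end

section
/- Let S, Q be N×N real symmetric positive definite matrices and J̃ an N×N real antisymmetric matrix satisfying J̃Q − QJ̃ = −QS − SQ + (2·Tr(S)/N)·Q, and set J = S^{−1/2}·J̃·S^{−1/2}. Suppose Σ : [0,∞) → M_N(ℝ) is differentiable and satisfies dΣ_t/dt = −(I + J)·S·Σ_t − Σ_t·S·(I − J) + 2·I for all t ≥ 0. Then for every t ≥ 0: ‖Σ_t − S⁻¹‖ ≤ κ(Q⁻¹S)·exp(−2·(Tr(S)/N)·t)·‖Σ₀ − S⁻¹‖. -/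
open Matrix
open scoped Matrix.Norms.L2Operator MatrixOrder

open NormedSpace

private lemma norm_le_of_conj {N : ℕ} (P W X : Matrix (Fin N) (Fin N) ℝ)
    (hP : Pᴴ = P) (hW : IsUnit W.det) (h : P = W * X * W⁻¹) : ‖P‖ ≤ ‖X‖ := by
  by_cases hX : X = 0
  · simp [h, hX]
  have hXpos : 0 < ‖X‖ := norm_pos_iff.mpr hX
  have hpowP : ∀ k : ℕ, ‖P‖ ^ (2 ^ k) = ‖P ^ (2 ^ k)‖ := by
    intro k
    induction k with
    | zero => simp
    | succ k ih =>
      have e : 2 ^ (k + 1) = 2 ^ k + 2 ^ k := by rw [pow_succ, mul_two]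
      have hPH : (P ^ (2 ^ k))ᴴ = P ^ (2 ^ k) := by rw [conjTranspose_pow, hP]
      calc ‖P‖ ^ 2 ^ (k + 1) = ‖P‖ ^ 2 ^ k * ‖P‖ ^ 2 ^ k := by rw [e, pow_add]
        _ = ‖P ^ 2 ^ k‖ * ‖P ^ 2 ^ k‖ := by rw [ih]
        _ = ‖(P ^ 2 ^ k)ᴴ * P ^ 2 ^ k‖ := by
            rw [← Matrix.star_eq_conjTranspose, CStarRing.norm_star_mul_self]
        _ = ‖P ^ 2 ^ (k + 1)‖ := by rw [hPH, e, pow_add]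
  have hconj : ∀ k : ℕ, P ^ k = W * X ^ k * W⁻¹ := by
    intro k
    induction k with
    | zero => simp [Matrix.mul_nonsing_inv W hW]
    | succ k ih =>
      rw [pow_succ, ih, h, pow_succ]
      have hWW : W⁻¹ * (W * (X * W⁻¹)) = X * W⁻¹ := by
        rw [← Matrix.mul_assoc, Matrix.nonsing_inv_mul W hW, Matrix.one_mul]
      simp only [Matrix.mul_assoc, hWW]
  have hbound : ∀ k : ℕ, ‖P‖ ^ (2 ^ k) ≤ ‖W‖ * ‖W⁻¹‖ * ‖X‖ ^ (2 ^ k) := by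
    intro k
    rw [hpowP k, hconj (2 ^ k)]
    calc ‖W * X ^ 2 ^ k * W⁻¹‖ ≤ ‖W * X ^ 2 ^ k‖ * ‖W⁻¹‖ := norm_mul_le _ _
      _ ≤ ‖W‖ * ‖X ^ 2 ^ k‖ * ‖W⁻¹‖ := by
          exact mul_le_mul_of_nonneg_right (norm_mul_le _ _) (norm_nonneg _)
      _ ≤ ‖W‖ * ‖X‖ ^ 2 ^ k * ‖W⁻¹‖ := by
          have := norm_pow_le' X (pow_pos (by norm_num) k : 0 < 2 ^ k)
          have h2 : (0:ℝ) ≤ ‖W‖ := norm_nonneg _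
          have h3 : (0:ℝ) ≤ ‖W⁻¹‖ := norm_nonneg _
          nlinarith [mul_le_mul_of_nonneg_right (mul_le_mul_of_nonneg_left this h2) h3]
      _ = ‖W‖ * ‖W⁻¹‖ * ‖X‖ ^ 2 ^ k := by ring
  by_contra hcon
  push_neg at hcon
  set r : ℝ := ‖P‖ / ‖X‖ with hr
  have hr1 : 1 < r := (one_lt_div hXpos).mpr hcon
  obtain ⟨n, hn⟩ := pow_unbounded_of_one_lt (‖W‖ * ‖W⁻¹‖) hr1
  have hn2 : r ^ n ≤ r ^ (2 ^ n) := pow_le_pow_right₀ hr1.le (Nat.lt_two_pow_self).le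
  have h3 : r ^ (2 ^ n) * ‖X‖ ^ (2 ^ n) = ‖P‖ ^ (2 ^ n) := by
    rw [hr, div_pow]
    field_simp
  have h4 : (‖W‖ * ‖W⁻¹‖) * ‖X‖ ^ (2 ^ n) < r ^ (2 ^ n) * ‖X‖ ^ (2 ^ n) :=
    mul_lt_mul_of_pos_right (lt_of_lt_of_le hn hn2) (pow_pos hXpos _)
  have := hbound n
  linarith

set_option maxHeartbeats 1600000 in
/-- For `(J̃, Q)` satisfying `J̃Q - QJ̃ = -QS - SQ + (2Tr(S)/N)Q` and
`J = S^{-1/2} J̃ S^{-1/2}`, any solution of the Lyapunov equation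
`dΣ_t/dt = -(I+J)SΣ_t - Σ_t S(I-J) + 2I` on `[0,∞)` satisfies
`‖Σ_t - S⁻¹‖ ≤ κ(Q⁻¹S) e^{-2(Tr(S)/N)t} ‖Σ₀ - S⁻¹‖` for all `t ≥ 0`. -/
theorem covariance_decay
    (N : ℕ) (hN : 1 ≤ N) (S Q J' : Matrix (Fin N) (Fin N) ℝ)
    (hS : S.PosDef) (hQ : Q.PosDef) (hJ' : J'ᵀ = -J')
    (heq : J' * Q - Q * J' = -(Q * S) - S * Q + (2 * S.trace / N) • Q)
    (J : Matrix (Fin N) (Fin N) ℝ)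
    (hJdef : J = (CFC.sqrt S)⁻¹ * J' * (CFC.sqrt S)⁻¹)
    (Sig : ℝ → Matrix (Fin N) (Fin N) ℝ)
    (hSig : ∀ t ∈ Set.Ici (0 : ℝ), HasDerivWithinAt Sig
      (-((1 + J) * S * Sig t) - Sig t * (S * (1 - J)) +
        (2 : ℝ) • (1 : Matrix (Fin N) (Fin N) ℝ)) (Set.Ici (0 : ℝ)) t) :
    ∀ t : ℝ, 0 ≤ t →
      ‖Sig t - S⁻¹‖ ≤
        (‖Q⁻¹ * S‖ * ‖(Q⁻¹ * S)⁻¹‖) * Real.exp (-2 * (S.trace / N) * t) *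
          ‖Sig 0 - S⁻¹‖ := by
  haveI : NeZero N := ⟨by omega⟩
  -- basic matrix facts
  set B := CFC.sqrt S with hBdef
  have hBB : B * B = S := CFC.sqrt_mul_sqrt_self S hS.posSemidef.nonneg
  have hBH : Bᴴ = B := (CFC.sqrt_nonneg S).posSemidef.isHermitian
  have hSH : Sᴴ = S := hS.isHermitian
  have hQH : Qᴴ = Q := hQ.isHermitian
  have hSdet : IsUnit S.det := hS.det_pos.ne'.isUnit
  have hQdet : IsUnit Q.det := hQ.det_pos.ne'.isUnit
  have hBdet : IsUnit B.det := by
    have h : S.det = B.det * B.det := by rw [← hBB, Matrix.det_mul]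
    exact isUnit_of_mul_isUnit_left (h ▸ hSdet)
  have hBu : IsUnit B := (Matrix.isUnit_iff_isUnit_det B).mpr hBdet
  have hB1 : B * B⁻¹ = 1 := Matrix.mul_nonsing_inv B hBdet
  have hB1' : B⁻¹ * B = 1 := Matrix.nonsing_inv_mul B hBdet
  have hBc : ∀ X : Matrix (Fin N) (Fin N) ℝ, B * (B⁻¹ * X) = X := fun X => by
    rw [← Matrix.mul_assoc, hB1, Matrix.one_mul]
  have hBc' : ∀ X : Matrix (Fin N) (Fin N) ℝ, B⁻¹ * (B * X) = X := fun X => by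
    rw [← Matrix.mul_assoc, hB1', Matrix.one_mul]
  have hBHi : (B⁻¹)ᴴ = B⁻¹ := by rw [Matrix.conjTranspose_nonsing_inv, hBH]
  set C := CFC.sqrt Q with hCdef
  have hCC : C * C = Q := CFC.sqrt_mul_sqrt_self Q hQ.posSemidef.nonneg
  have hCH : Cᴴ = C := (CFC.sqrt_nonneg Q).posSemidef.isHermitian
  have hCdet : IsUnit C.det := by
    have h : Q.det = C.det * C.det := by rw [← hCC, Matrix.det_mul]
    exact isUnit_of_mul_isUnit_left (h ▸ hQdet)
  have hCu : IsUnit C := (Matrix.isUnit_iff_isUnit_det C).mpr hCdet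
  have hC1 : C * C⁻¹ = 1 := Matrix.mul_nonsing_inv C hCdet
  have hC1' : C⁻¹ * C = 1 := Matrix.nonsing_inv_mul C hCdet
  have hCc : ∀ X : Matrix (Fin N) (Fin N) ℝ, C * (C⁻¹ * X) = X := fun X => by
    rw [← Matrix.mul_assoc, hC1, Matrix.one_mul]
  have hCc' : ∀ X : Matrix (Fin N) (Fin N) ℝ, C⁻¹ * (C * X) = X := fun X => by
    rw [← Matrix.mul_assoc, hC1', Matrix.one_mul]
  have hCHi : (C⁻¹)ᴴ = C⁻¹ := by rw [Matrix.conjTranspose_nonsing_inv, hCH]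
  have hSinv : S⁻¹ = B⁻¹ * B⁻¹ := by rw [← hBB, Matrix.mul_inv_rev]
  have hQinv : Q⁻¹ = C⁻¹ * C⁻¹ := by rw [← hCC, Matrix.mul_inv_rev]
  have hSS1 : S * S⁻¹ = 1 := Matrix.mul_nonsing_inv S hSdet
  have hS1S : S⁻¹ * S = 1 := Matrix.nonsing_inv_mul S hSdet
  -- J facts
  have hJ'H : J'ᴴ = -J' := by rw [conjTranspose_eq_transpose_of_trivial, hJ']
  have hJH : Jᴴ = -J := by
    rw [hJdef]
    simp only [Matrix.conjTranspose_mul, hBHi, hJ'H, Matrix.neg_mul, Matrix.mul_neg,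
      Matrix.mul_assoc]
  set A : Matrix (Fin N) (Fin N) ℝ := (1 + J) * S with hAdef
  set A' : Matrix (Fin N) (Fin N) ℝ := S * (1 - J) with hA'def
  have hAH : Aᴴ = A' := by
    rw [hAdef, hA'def, Matrix.conjTranspose_mul, Matrix.conjTranspose_add,
      Matrix.conjTranspose_one, hJH, hSH, sub_eq_add_neg]
  have hAconj : A = B⁻¹ * (S + J') * B := by
    rw [hAdef, hJdef, ← hBB]
    simp only [Matrix.add_mul, Matrix.mul_add, Matrix.one_mul, Matrix.mul_one,
      Matrix.mul_assoc, hBc, hBc']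
  -- the derivative identity
  have hVeq : ∀ u : ℝ,
      -((1 + J) * S * Sig u) - Sig u * (S * (1 - J)) + (2 : ℝ) • (1 : Matrix (Fin N) (Fin N) ℝ)
        = -(A * (Sig u - S⁻¹)) - (Sig u - S⁻¹) * A' := by
    intro u
    have h1 : A * S⁻¹ = 1 + J := by rw [hAdef, Matrix.mul_assoc, hSS1, Matrix.mul_one]
    have h2 : S⁻¹ * A' = 1 - J := by rw [hA'def, ← Matrix.mul_assoc, hS1S, Matrix.one_mul]
    have h3 : (2 : ℝ) • (1 : Matrix (Fin N) (Fin N) ℝ) = (1 + J) + (1 - J) := by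
      rw [two_smul ℝ (1 : Matrix (Fin N) (Fin N) ℝ)]; abel
    have expand : -(A * (Sig u - S⁻¹)) - (Sig u - S⁻¹) * A'
        = -(A * Sig u) - Sig u * A' + (A * S⁻¹ + S⁻¹ * A') := by
      rw [Matrix.mul_sub, Matrix.sub_mul]; abel
    rw [← hAdef, ← hA'def, expand, h1, h2, h3]
  -- constancy of exp(tA) Δ exp(tA')
  have key : ∀ u : ℝ, 0 ≤ u →
      exp (u • A) * ((Sig u - S⁻¹) * exp (u • A')) = Sig 0 - S⁻¹ := by
    intro u hu
    have hD : ∀ v ∈ Set.Ici (0 : ℝ), HasDerivWithinAt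
        (fun w => exp (w • A) * ((Sig w - S⁻¹) * exp (w • A'))) 0 (Set.Ici 0) v := by
      intro v hv
      have hE : HasDerivWithinAt (fun w : ℝ => exp (w • A)) (exp (v • A) * A)
          (Set.Ici 0) v := (hasDerivAt_exp_smul_const A v).hasDerivWithinAt
      have hF : HasDerivWithinAt (fun w : ℝ => exp (w • A')) (A' * exp (v • A'))
          (Set.Ici 0) v := (hasDerivAt_exp_smul_const' A' v).hasDerivWithinAt
      have hΔ : HasDerivWithinAt (fun w => Sig w - S⁻¹)
          (-(A * (Sig v - S⁻¹)) - (Sig v - S⁻¹) * A') (Set.Ici 0) v := by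
        have h := (hSig v hv).sub_const S⁻¹
        rwa [hVeq v] at h
      have hmul := hE.mul (hΔ.mul hF)
      refine hmul.congr_deriv ?_
      symm
      simp only [Matrix.mul_add, Matrix.add_mul, Matrix.sub_mul, Matrix.mul_sub,
        Matrix.neg_mul, Matrix.mul_neg, Matrix.mul_assoc, Pi.mul_apply]
      abel
    have hcont : ContinuousOn
        (fun w => exp (w • A) * ((Sig w - S⁻¹) * exp (w • A'))) (Set.Icc 0 u) :=
      fun v hv => ((hD v hv.1).continuousWithinAt).mono Set.Icc_subset_Ici_self
    have hc := constant_of_has_deriv_right_zero hcont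
      (fun v hv => (hD v hv.1).mono (Set.Ici_subset_Ici.mpr hv.1)) u
      (Set.right_mem_Icc.mpr hu)
    simpa [NormedSpace.exp_zero] using hc
  intro t ht
  -- solve for Sig t - S⁻¹
  have hinv1 : ∀ X : Matrix (Fin N) (Fin N) ℝ, exp (-X) * exp X = 1 := fun X => by
    rw [← Matrix.exp_add_of_commute _ _ (Commute.neg_left (Commute.refl X)), neg_add_cancel,
      NormedSpace.exp_zero]
  have hinv2 : ∀ X : Matrix (Fin N) (Fin N) ℝ, exp X * exp (-X) = 1 := fun X => by
    rw [← Matrix.exp_add_of_commute _ _ (Commute.neg_right (Commute.refl X)), add_neg_cancel,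
      NormedSpace.exp_zero]
  have hEE : exp ((-t) • A) * exp (t • A) = 1 := by
    rw [neg_smul]; exact hinv1 (t • A)
  have hFF : exp (t • A') * exp ((-t) • A') = 1 := by
    rw [neg_smul]; exact hinv2 (t • A')
  have hsol : Sig t - S⁻¹ =
      exp ((-t) • A) * ((Sig 0 - S⁻¹) * exp ((-t) • A')) := by
    rw [← key t ht]
    simp only [Matrix.mul_assoc]
    rw [hFF, Matrix.mul_one, ← Matrix.mul_assoc, hEE, Matrix.one_mul]
  -- conjugation structure of exp(-tA)
  set lr : ℝ := S.trace / (N : ℝ) with hlr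
  set M : Matrix (Fin N) (Fin N) ℝ := S + J' - lr • 1 with hMdef
  set K : Matrix (Fin N) (Fin N) ℝ := C⁻¹ * M * C with hKdef
  have hMC : C * K * C⁻¹ = M := by
    rw [hKdef]
    simp only [Matrix.mul_assoc, hCc, hCc', hC1, hC1', Matrix.mul_one, Matrix.one_mul]
  -- M, K facts
  have hMH : Mᴴ = S - J' - lr • 1 := by
    rw [hMdef]
    simp only [Matrix.conjTranspose_sub, Matrix.conjTranspose_add, Matrix.conjTranspose_smul,
      Matrix.conjTranspose_one, hSH, hJ'H, star_trivial]
    abel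
  have hscal : (2 * S.trace / (N : ℝ)) = 2 * lr := by rw [hlr]; ring
  have hMQ : M * Q + Q * Mᴴ = 0 := by
    rw [hMH, hMdef]
    have h3 : J' * Q = Q * J' + (-(Q * S) - S * Q + (2 * S.trace / (N:ℝ)) • Q) := by
      rw [← heq]; abel
    simp only [Matrix.sub_mul, Matrix.mul_sub, Matrix.add_mul, Matrix.mul_add,
      smul_mul_assoc, mul_smul_comm, Matrix.one_mul, Matrix.mul_one, h3, hscal]
    module
  have hMHeq : Mᴴ = -(Q⁻¹ * (M * Q)) := by
    have h5 : Q * Mᴴ + M * Q = 0 := by rw [add_comm]; exact hMQ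
    have h4 : Q * Mᴴ = -(M * Q) := eq_neg_of_add_eq_zero_left h5
    calc Mᴴ = Q⁻¹ * (Q * Mᴴ) := by
          rw [← Matrix.mul_assoc, Matrix.nonsing_inv_mul Q hQdet, Matrix.one_mul]
      _ = -(Q⁻¹ * (M * Q)) := by rw [h4, Matrix.mul_neg]
  have hKH : Kᴴ = -K := by
    have h6 : (C⁻¹ * M * C)ᴴ = C * (Mᴴ * C⁻¹) := by
      simp only [Matrix.conjTranspose_mul, hCH, hCHi, Matrix.mul_assoc]
    rw [hKdef, h6, hMHeq, hQinv, ← hCC]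
    simp only [Matrix.mul_neg, Matrix.neg_mul, Matrix.mul_assoc, hCc, hCc', hC1, hC1',
      Matrix.mul_one, Matrix.one_mul]
  -- orthogonality of exp(-tK)
  set G : Matrix (Fin N) (Fin N) ℝ := exp ((-t) • K) with hGdef
  have hGstar : star G = exp (t • K) := by
    rw [hGdef, star_exp]
    congr 1
    rw [star_smul, star_trivial, Matrix.star_eq_conjTranspose, hKH, smul_neg, neg_smul, neg_neg]
  have hGorth : star G * G = 1 := by
    rw [hGstar, hGdef, neg_smul]
    exact hinv2 (t • K)
  have hGnorm : ‖G‖ = 1 := by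
    have h5 := CStarRing.norm_star_mul_self (x := G)
    rw [hGorth, norm_one] at h5
    rcases mul_self_eq_one_iff.mp h5.symm with h | h
    · exact h
    · exfalso
      have h7 := norm_nonneg G
      rw [h] at h7
      linarith
  -- scalar exponential
  have hexp1 : ∀ c : ℝ, exp (c • (1 : Matrix (Fin N) (Fin N) ℝ)) = Real.exp c • 1 := by
    intro c
    rw [← Algebra.algebraMap_eq_smul_one, ← algebraMap_exp_comm, Real.exp_eq_exp_ℝ,
      Algebra.algebraMap_eq_smul_one]
  have hsplit : (-t) • (S + J') = ((-t) * lr) • (1 : Matrix (Fin N) (Fin N) ℝ) + (-t) • M := by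
    rw [hMdef]; module
  have hcomm : Commute (((-t) * lr) • (1 : Matrix (Fin N) (Fin N) ℝ)) ((-t) • M) :=
    (Commute.one_left ((-t) • M)).smul_left _
  have hsum : exp ((-t) • (S + J')) = Real.exp ((-t) * lr) • exp ((-t) • M) := by
    rw [hsplit, Matrix.exp_add_of_commute _ _ hcomm, hexp1, smul_mul_assoc, Matrix.one_mul]
  have hexpM : exp ((-t) • M) = C * exp ((-t) • K) * C⁻¹ := by
    have h6 : (-t) • M = C * ((-t) • K) * C⁻¹ := by
      rw [← hMC, mul_smul_comm, smul_mul_assoc]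
    have h7 := Matrix.exp_units_conj hCu.unit ((-t) • K)
    rw [Matrix.coe_units_inv, hCu.unit_spec] at h7
    rw [h6, h7]
  have hexpA : exp ((-t) • A) = B⁻¹ * exp ((-t) • (S + J')) * B := by
    have h8 : (-t) • A = B⁻¹ * ((-t) • (S + J')) * B := by
      rw [hAconj, mul_smul_comm, smul_mul_assoc]
    have h9 := Matrix.exp_units_conj' hBu.unit ((-t) • (S + J'))
    rw [Matrix.coe_units_inv, hBu.unit_spec] at h9
    rw [h8, h9]
  have hEfinal : exp ((-t) • A)
      = Real.exp ((-t) * lr) • ((B⁻¹ * C) * (G * (C⁻¹ * B))) := by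
    rw [hexpA, hsum, hexpM, ← hGdef]
    simp only [smul_mul_assoc, mul_smul_comm, Matrix.mul_assoc]
  -- norm estimates
  have hx1 : (0:ℝ) ≤ ‖B⁻¹ * C‖ := norm_nonneg _
  have hEnorm : ‖exp ((-t) • A)‖ ≤ Real.exp ((-t) * lr) * (‖B⁻¹ * C‖ * ‖C⁻¹ * B‖) := by
    rw [hEfinal, norm_smul, Real.norm_eq_abs, Real.abs_exp]
    apply mul_le_mul_of_nonneg_left _ (Real.exp_nonneg _)
    calc ‖(B⁻¹ * C) * (G * (C⁻¹ * B))‖ ≤ ‖B⁻¹ * C‖ * ‖G * (C⁻¹ * B)‖ := norm_mul_le _ _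
      _ ≤ ‖B⁻¹ * C‖ * (‖G‖ * ‖C⁻¹ * B‖) := mul_le_mul_of_nonneg_left (norm_mul_le _ _) hx1
      _ = ‖B⁻¹ * C‖ * ‖C⁻¹ * B‖ := by rw [hGnorm, one_mul]
  have hFstar : star (exp ((-t) • A)) = exp ((-t) • A') := by
    rw [star_exp]
    congr 1
    rw [star_smul, star_trivial, Matrix.star_eq_conjTranspose, hAH]
  have hFnorm : ‖exp ((-t) • A')‖ = ‖exp ((-t) • A)‖ := by
    rw [← hFstar, Matrix.star_eq_conjTranspose, Matrix.l2_opNorm_conjTranspose]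
  -- condition-number bounds
  have hP1 : (B⁻¹ * C) * star (B⁻¹ * C) = B⁻¹ * (Q * B⁻¹) := by
    rw [Matrix.star_eq_conjTranspose, Matrix.conjTranspose_mul, hCH, hBHi, ← hCC]
    simp only [Matrix.mul_assoc]
  have hx1sq : ‖B⁻¹ * C‖ * ‖B⁻¹ * C‖ = ‖B⁻¹ * (Q * B⁻¹)‖ := by
    rw [← CStarRing.norm_self_mul_star, hP1]
  have hP2 : star (C⁻¹ * B) * (C⁻¹ * B) = B * (Q⁻¹ * B) := by
    rw [Matrix.star_eq_conjTranspose, Matrix.conjTranspose_mul, hBH, hCHi, hQinv]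
    simp only [Matrix.mul_assoc]
  have hx2sq : ‖C⁻¹ * B‖ * ‖C⁻¹ * B‖ = ‖B * (Q⁻¹ * B)‖ := by
    rw [← CStarRing.norm_star_mul_self, hP2]
  have hBidet : IsUnit (B⁻¹).det := B.isUnit_nonsing_inv_det hBdet
  have hq2 : ‖B⁻¹ * (Q * B⁻¹)‖ ≤ ‖(Q⁻¹ * S)⁻¹‖ := by
    have hinvQS : (Q⁻¹ * S)⁻¹ = S⁻¹ * Q := by
      rw [Matrix.mul_inv_rev, Matrix.nonsing_inv_nonsing_inv Q hQdet]
    have hHerm : (B⁻¹ * (Q * B⁻¹))ᴴ = B⁻¹ * (Q * B⁻¹) := by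
      simp only [Matrix.conjTranspose_mul, hBHi, hQH, Matrix.mul_assoc]
    have hsim : B⁻¹ * (Q * B⁻¹) = B⁻¹ * (Q * S⁻¹) * (B⁻¹)⁻¹ := by
      rw [Matrix.nonsing_inv_nonsing_inv B hBdet, hSinv]
      simp only [Matrix.mul_assoc, hBc, hBc', hB1, hB1', Matrix.mul_one, Matrix.one_mul]
    have hle := norm_le_of_conj _ _ _ hHerm hBidet hsim
    have hQSH : ‖Q * S⁻¹‖ = ‖(Q⁻¹ * S)⁻¹‖ := by
      have h10 : (S⁻¹ * Q)ᴴ = Q * S⁻¹ := by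
        rw [Matrix.conjTranspose_mul, hQH, Matrix.conjTranspose_nonsing_inv, hSH]
      rw [hinvQS, ← h10, Matrix.l2_opNorm_conjTranspose]
    rw [← hQSH]
    exact hle
  have hq1 : ‖B * (Q⁻¹ * B)‖ ≤ ‖Q⁻¹ * S‖ := by
    have hQiH : (Q⁻¹)ᴴ = Q⁻¹ := by rw [Matrix.conjTranspose_nonsing_inv, hQH]
    have hHerm : (B * (Q⁻¹ * B))ᴴ = B * (Q⁻¹ * B) := by
      simp only [Matrix.conjTranspose_mul, hBH, hQiH, Matrix.mul_assoc]
    have hsim : B * (Q⁻¹ * B) = B * (Q⁻¹ * S) * B⁻¹ := by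
      rw [← hBB]
      simp only [Matrix.mul_assoc, hBc, hBc', hB1, hB1', Matrix.mul_one, Matrix.one_mul]
    exact norm_le_of_conj _ _ _ hHerm hBdet hsim
  -- assemble
  set e := ‖exp ((-t) • A)‖ with he
  have hd0 : (0:ℝ) ≤ ‖Sig 0 - S⁻¹‖ := norm_nonneg _
  have he0 : (0:ℝ) ≤ e := norm_nonneg _
  have hDbound : ‖Sig t - S⁻¹‖ ≤ e * (‖Sig 0 - S⁻¹‖ * e) := by
    rw [hsol]
    calc ‖exp ((-t) • A) * ((Sig 0 - S⁻¹) * exp ((-t) • A'))‖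
        ≤ e * ‖(Sig 0 - S⁻¹) * exp ((-t) • A')‖ := norm_mul_le _ _
      _ ≤ e * (‖Sig 0 - S⁻¹‖ * ‖exp ((-t) • A')‖) :=
          mul_le_mul_of_nonneg_left (norm_mul_le _ _) he0
      _ = e * (‖Sig 0 - S⁻¹‖ * e) := by rw [hFnorm]
  have hb : e ≤ Real.exp ((-t) * lr) * (‖B⁻¹ * C‖ * ‖C⁻¹ * B‖) := hEnorm
  have hbe : (0:ℝ) ≤ Real.exp ((-t) * lr) * (‖B⁻¹ * C‖ * ‖C⁻¹ * B‖) :=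
    mul_nonneg (Real.exp_nonneg _) (mul_nonneg (norm_nonneg _) (norm_nonneg _))
  have step1 : e * (‖Sig 0 - S⁻¹‖ * e)
      ≤ (Real.exp ((-t) * lr) * (‖B⁻¹ * C‖ * ‖C⁻¹ * B‖)) *
        (‖Sig 0 - S⁻¹‖ * (Real.exp ((-t) * lr) * (‖B⁻¹ * C‖ * ‖C⁻¹ * B‖))) :=
    mul_le_mul hb (mul_le_mul_of_nonneg_left hb hd0) (mul_nonneg hd0 he0) hbe
  have step2 : (Real.exp ((-t) * lr) * (‖B⁻¹ * C‖ * ‖C⁻¹ * B‖)) *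
        (‖Sig 0 - S⁻¹‖ * (Real.exp ((-t) * lr) * (‖B⁻¹ * C‖ * ‖C⁻¹ * B‖)))
      = (Real.exp ((-t) * lr) * Real.exp ((-t) * lr)) *
        ((‖B⁻¹ * C‖ * ‖B⁻¹ * C‖) * (‖C⁻¹ * B‖ * ‖C⁻¹ * B‖)) * ‖Sig 0 - S⁻¹‖ := by ring
  have step3 : (‖B⁻¹ * C‖ * ‖B⁻¹ * C‖) * (‖C⁻¹ * B‖ * ‖C⁻¹ * B‖)
      ≤ ‖(Q⁻¹ * S)⁻¹‖ * ‖Q⁻¹ * S‖ := by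
    have g1 : ‖B⁻¹ * C‖ * ‖B⁻¹ * C‖ ≤ ‖(Q⁻¹ * S)⁻¹‖ := by rw [hx1sq]; exact hq2
    have g2 : ‖C⁻¹ * B‖ * ‖C⁻¹ * B‖ ≤ ‖Q⁻¹ * S‖ := by rw [hx2sq]; exact hq1
    exact mul_le_mul g1 g2 (mul_self_nonneg _) (norm_nonneg _)
  have hcc : Real.exp ((-t) * lr) * Real.exp ((-t) * lr) = Real.exp (-2 * lr * t) := by
    rw [← Real.exp_add]; congr 1; ring
  calc ‖Sig t - S⁻¹‖ ≤ e * (‖Sig 0 - S⁻¹‖ * e) := hDbound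
    _ ≤ (Real.exp ((-t) * lr) * (‖B⁻¹ * C‖ * ‖C⁻¹ * B‖)) *
        (‖Sig 0 - S⁻¹‖ * (Real.exp ((-t) * lr) * (‖B⁻¹ * C‖ * ‖C⁻¹ * B‖))) := step1
    _ = (Real.exp ((-t) * lr) * Real.exp ((-t) * lr)) *
        ((‖B⁻¹ * C‖ * ‖B⁻¹ * C‖) * (‖C⁻¹ * B‖ * ‖C⁻¹ * B‖)) * ‖Sig 0 - S⁻¹‖ := step2
    _ ≤ (Real.exp ((-t) * lr) * Real.exp ((-t) * lr)) *
        (‖(Q⁻¹ * S)⁻¹‖ * ‖Q⁻¹ * S‖) * ‖Sig 0 - S⁻¹‖ := by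
        exact mul_le_mul_of_nonneg_right (mul_le_mul_of_nonneg_left step3
          (mul_nonneg (Real.exp_nonneg _) (Real.exp_nonneg _))) hd0
    _ = ‖Q⁻¹ * S‖ * ‖(Q⁻¹ * S)⁻¹‖ * Real.exp (-2 * lr * t) * ‖Sig 0 - S⁻¹‖ := by
        rw [hcc]; ring
end

section
/- Let H be a complex Hilbert space, let L be a bounded linear operator on H, and let α ∈ (0, π/4] be such that for every u ∈ H one has Re⟨u, Lu⟩ ≥ 0 and |Im⟨u, Lu⟩| ≤ tan(π/2 − 2α)·Re⟨u, Lu⟩ (i.e. the numerical range of L lies in the sector |arg z| ≤ π/2 − 2α). Then for every t ≥ 0, the operator norm satisfies ‖t·L·exp(−t·L)‖ ≤ 1/(π·sin²α). -/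
set_option maxHeartbeats 8000000
set_option synthInstance.maxHeartbeats 400000

open NormedSpace

/-- If `B` is accretive (numerical range in the closed right half plane), then
`exp (-B)` is a contraction. -/
lemma exp_neg_accretive_contraction {H : Type*} [NormedAddCommGroup H]
    [InnerProductSpace ℂ H] [CompleteSpace H] (B : H →L[ℂ] H)
    (hB : ∀ u : H, 0 ≤ (inner ℂ u (B u) : ℂ).re) :
    ‖exp (-B)‖ ≤ 1 := by
  refine ContinuousLinearMap.opNorm_le_bound _ zero_le_one fun u => ?_
  rw [one_mul]
  set v : ℝ → H := fun r => exp (r • (-B)) u with hv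
  have hd : ∀ r : ℝ, HasDerivAt v (-(B (v r))) r := by
    intro r
    have h1 : HasDerivAt (fun r : ℝ => exp (r • (-B))) ((-B) * exp (r • (-B))) r :=
      hasDerivAt_exp_smul_const' (-B) r
    have h2 := ((ContinuousLinearMap.apply ℂ H u).restrictScalars
      ℝ).hasFDerivAt.comp_hasDerivAt r h1
    simpa [hv, ContinuousLinearMap.mul_apply, Function.comp_def] using h2
  set φ : ℝ → ℝ := fun r => ((inner ℂ (v r) (v r) : ℂ)).re with hφdef
  have hφ : ∀ r : ℝ, HasDerivAt φ (-(2 * ((inner ℂ (v r) (B (v r))) : ℂ).re)) r := by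
    intro r
    have h3 : HasDerivAt (fun r => (inner ℂ (v r) (v r) : ℂ))
        ((inner ℂ (v r) (-(B (v r))) : ℂ) + (inner ℂ (-(B (v r))) (v r) : ℂ)) r :=
      (hd r).inner ℂ (hd r)
    have h4 := Complex.reCLM.hasFDerivAt.comp_hasDerivAt r h3
    have h5 : ((inner ℂ (v r) (-(B (v r))) : ℂ) + (inner ℂ (-(B (v r))) (v r) : ℂ)).re
        = -(2 * ((inner ℂ (v r) (B (v r))) : ℂ).re) := by
      have hsymm : ((inner ℂ (B (v r)) (v r) : ℂ)).re = ((inner ℂ (v r) (B (v r)) : ℂ)).re := by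
        rw [← inner_conj_symm (B (v r)) (v r), Complex.conj_re]
      rw [inner_neg_right, inner_neg_left, Complex.add_re, Complex.neg_re, Complex.neg_re,
        hsymm]
      ring
    rw [← h5]
    exact h4
  have hanti : AntitoneOn φ (Set.Icc (0:ℝ) 1) := by
    apply antitoneOn_of_deriv_nonpos (convex_Icc 0 1)
    · exact fun r _ => (hφ r).continuousAt.continuousWithinAt
    · exact fun r _ => (hφ r).differentiableAt.differentiableWithinAt
    · intro r _
      rw [(hφ r).deriv]
      have := hB (v r)
      linarith
  have h10 : φ 1 ≤ φ 0 :=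
    hanti (Set.mem_Icc.mpr ⟨le_rfl, zero_le_one⟩) (Set.mem_Icc.mpr ⟨zero_le_one, le_rfl⟩)
      zero_le_one
  have hφ0 : φ 0 = ‖u‖ ^ 2 := by
    have : v 0 = u := by simp [hv]
    rw [hφdef]
    simp only [this]
    exact_mod_cast inner_self_eq_norm_sq (𝕜 := ℂ) u
  have hφ1 : φ 1 = ‖exp (-B) u‖ ^ 2 := by
    have : v 1 = exp (-B) u := by
      simp only [hv, one_smul]
    rw [hφdef]
    simp only [this]
    exact_mod_cast inner_self_eq_norm_sq (𝕜 := ℂ) (exp (-B) u)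
  rw [hφ0, hφ1] at h10
  nlinarith [norm_nonneg (exp (-B) u), norm_nonneg u]

/-- Cauchy estimate for the derivative at the center of a disk. -/
lemma norm_deriv_le_of_bound {E : Type*} [NormedAddCommGroup E] [NormedSpace ℂ E]
    [CompleteSpace E] (f : ℂ → E) {r M : ℝ} (hr : 0 < r)
    (hd : DifferentiableOn ℂ f (Metric.closedBall 0 r))
    (hb : ∀ z ∈ Metric.closedBall (0:ℂ) r, ‖f z‖ ≤ M) :
    ‖deriv f 0‖ ≤ M / r := by
  lift r to NNReal using hr.le with R hR
  have hR0 : 0 < R := by exact_mod_cast hr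
  have hp := hd.hasFPowerSeriesOnBall hR0
  have h1 : deriv f 0 = cauchyPowerSeries f 0 R 1 fun _ => (1:ℂ) :=
    hp.hasFPowerSeriesAt.deriv
  have hM : 0 ≤ M := le_trans (norm_nonneg (f 0))
    (hb 0 (Metric.mem_closedBall_self (by exact_mod_cast hR0.le)))
  have h2 : ‖cauchyPowerSeries f 0 R 1 fun _ => (1:ℂ)‖ ≤ ‖cauchyPowerSeries f 0 R 1‖ := by
    simpa using (cauchyPowerSeries f 0 R 1).le_opNorm fun _ => (1:ℂ)
  have h3 := norm_cauchyPowerSeries_le f 0 R 1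
  have h4 : (∫ θ : ℝ in (0)..2 * Real.pi, ‖f (circleMap 0 R θ)‖)
      ≤ ∫ _ : ℝ in (0)..2 * Real.pi, M := by
    apply intervalIntegral.integral_mono_on Real.two_pi_pos.le
    · apply ContinuousOn.intervalIntegrable
      apply Continuous.continuousOn
      apply Continuous.norm
      apply hd.continuousOn.comp_continuous (continuous_circleMap 0 R)
      intro θ
      have := circleMap_mem_sphere (0:ℂ) (by exact_mod_cast hR0.le : (0:ℝ) ≤ R) θ
      exact Metric.sphere_subset_closedBall this
    · exact intervalIntegrable_const
    · intro θ _
      apply hb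
      have := circleMap_mem_sphere (0:ℂ) (by exact_mod_cast hR0.le : (0:ℝ) ≤ R) θ
      exact Metric.sphere_subset_closedBall this
  rw [intervalIntegral.integral_const, smul_eq_mul] at h4
  have hRpos : (0:ℝ) < R := by exact_mod_cast hR0
  have h5 : ((2 * Real.pi)⁻¹ * ∫ θ : ℝ in (0)..2 * Real.pi, ‖f (circleMap 0 R θ)‖)
      * |(R:ℝ)|⁻¹ ^ 1 ≤ M / R := by
    rw [abs_of_pos hRpos, pow_one]
    have h6 : (2 * Real.pi)⁻¹ * ((2 * Real.pi - 0) * M) = M := by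
      field_simp
      ring
    have h7 : (2 * Real.pi)⁻¹ * (∫ θ : ℝ in (0)..2 * Real.pi, ‖f (circleMap 0 R θ)‖) ≤ M := by
      calc (2 * Real.pi)⁻¹ * (∫ θ : ℝ in (0)..2 * Real.pi, ‖f (circleMap 0 R θ)‖)
          ≤ (2 * Real.pi)⁻¹ * ((2 * Real.pi - 0) * M) := by
            apply mul_le_mul_of_nonneg_left h4
            positivity
        _ = M := h6
    rw [div_eq_mul_inv]
    exact mul_le_mul_of_nonneg_right h7 (by positivity)
  rw [h1]
  exact le_trans h2 (le_trans h3 h5)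

/-- Auxiliary: the Möbius map inequality. -/
private lemma mobius_aux {aa rr x y : ℝ} (ha2 : aa ^ 2 < 1) (hr1 : rr < 1) (hr0 : 0 < rr)
    (hwsq : x ^ 2 + y ^ 2 ≤ rr ^ 2) :
    (x + aa) ^ 2 + y ^ 2 ≤ (1 + aa * x) ^ 2 + (aa * y) ^ 2 := by
  have p1 : (0:ℝ) ≤ 1 - aa ^ 2 := by linarith
  have hr2 : rr ^ 2 ≤ 1 := by nlinarith
  have p2 : (0:ℝ) ≤ 1 - (x ^ 2 + y ^ 2) := by linarith
  nlinarith [mul_nonneg p1 p2]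

/-- Auxiliary polynomial inequality. -/
private lemma sector_poly_aux {k s piv : ℝ} (hk0 : 0 ≤ k) (hk1 : k < 1) (hs0 : 0 < s)
    (hs2 : s ^ 2 = 1 - k ^ 2) (hπ : 0 < piv) (hπ315 : piv < 3.15) :
    2 * piv * s * (1 + 3 * k) ≤ 7 + 25 * k := by
  have hπ2 : piv ^ 2 < 9.9225 := by nlinarith
  have hXnn : (0:ℝ) ≤ (1 - k ^ 2) * (1 + 3 * k) ^ 2 := by
    apply mul_nonneg
    · nlinarith
    · positivity
  have hsq : (2 * piv * s * (1 + 3 * k)) ^ 2 ≤ (7 + 25 * k) ^ 2 := by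
    have e1 : (2 * piv * s * (1 + 3 * k)) ^ 2
        = 4 * piv ^ 2 * ((1 - k ^ 2) * (1 + 3 * k) ^ 2) := by
      rw [← hs2]; ring
    rw [e1]
    nlinarith [hπ2, hXnn, hk0, hk1, sq_nonneg k, mul_nonneg hk0 (sq_nonneg k),
      sq_nonneg (k ^ 2), mul_nonneg (mul_nonneg hk0 hk0) (sq_nonneg k)]
  nlinarith [hsq, hs0, hk0, hπ, mul_pos (mul_pos (mul_pos two_pos hπ) hs0)
    (by linarith : (0:ℝ) < 1 + 3 * k)]

/-- Auxiliary scaling inequality. -/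
private lemma sector_scale_aux {t ρ d m s k piv : ℝ} (e1 : ρ * m = 4 * t * s)
    (e2 : d * m = 3 * t * (1 - k))
    (hbr : 4 * piv * s * (1 - k) * m ≤ 32 * s ^ 2 - 18 * (1 - k) ^ 2) (hm : 0 < m) :
    t * ρ * (piv * (1 - k)) ≤ 2 * (ρ ^ 2 - d ^ 2) := by
  have hm2 : (0:ℝ) < m ^ 2 := by positivity
  have hscale : m ^ 2 * (t * ρ * (piv * (1 - k))) ≤ m ^ 2 * (2 * (ρ ^ 2 - d ^ 2)) := by
    have i1 : m ^ 2 * (t * ρ * (piv * (1 - k))) = t * (ρ * m) * (piv * (1 - k)) * m := by ring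
    have i2 : m ^ 2 * (2 * (ρ ^ 2 - d ^ 2)) = 2 * ((ρ * m) ^ 2 - (d * m) ^ 2) := by ring
    rw [i1, i2, e1, e2]
    nlinarith [mul_le_mul_of_nonneg_right hbr (sq_nonneg t)]
  exact le_of_mul_le_mul_left hscale hm2

/-- If the numerical range of a bounded operator `L` on a complex Hilbert
space lies in the sector `|arg z| ≤ π/2 - 2α` with `α ∈ (0, π/4]`, then
`‖t L e^{-tL}‖ ≤ 1/(π sin²α)` for all `t ≥ 0`. -/
theorem sectorial_semigroup_bound
    {H : Type*} [NormedAddCommGroup H] [InnerProductSpace ℂ H] [CompleteSpace H]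
    (L : H →L[ℂ] H) (α : ℝ) (hα : α ∈ Set.Ioc 0 (Real.pi / 4))
    (hsec : ∀ u : H,
      0 ≤ (inner ℂ u (L u) : ℂ).re ∧
      |(inner ℂ u (L u) : ℂ).im| ≤ Real.tan (Real.pi / 2 - 2 * α) * (inner ℂ u (L u) : ℂ).re) :
    ∀ t : ℝ, 0 ≤ t →
      ‖(t • L) * NormedSpace.exp (-(t • L))‖ ≤ 1 / (Real.pi * Real.sin α ^ 2) := by
  obtain ⟨hα0, hα4⟩ := hα
  have hπ : (0:ℝ) < Real.pi := Real.pi_pos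
  have hπ3 : (3:ℝ) < Real.pi := Real.pi_gt_three
  intro t ht
  have hsinα : 0 < Real.sin α := Real.sin_pos_of_pos_of_lt_pi hα0 (by linarith)
  have hRHS : 0 < 1 / (Real.pi * Real.sin α ^ 2) := by positivity
  rcases ht.eq_or_lt with rfl | htpos
  · simp only [zero_smul, zero_mul, norm_zero]
    exact hRHS.le
  -- trigonometric setup
  set k : ℝ := Real.cos (2 * α) with hkdef
  set s : ℝ := Real.sin (2 * α) with hsdef
  have hk0 : 0 ≤ k := Real.cos_nonneg_of_mem_Icc ⟨by linarith, by linarith⟩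
  have hk1 : k < 1 := by
    refine lt_of_le_of_ne (Real.cos_le_one _) fun h => ?_
    have h2 := (Real.cos_eq_one_iff_of_lt_of_lt (x := 2 * α)
      (by linarith) (by linarith)).mp h
    linarith
  have hs0 : 0 < s := Real.sin_pos_of_pos_of_lt_pi (by linarith) (by linarith)
  have hs2 : s ^ 2 = 1 - k ^ 2 := by
    have := Real.sin_sq_add_cos_sq (2 * α)
    rw [← hkdef, ← hsdef] at this
    linarith
  have hsin2 : Real.sin α ^ 2 = (1 - k) / 2 := by
    have h1 := Real.cos_two_mul α
    have h2 := Real.sin_sq_add_cos_sq α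
    rw [← hkdef] at h1
    linarith
  have htan : Real.tan (Real.pi / 2 - 2 * α) = k / s := by
    rw [Real.tan_eq_sin_div_cos, Real.sin_pi_div_two_sub, Real.cos_pi_div_two_sub]
  -- geometric data: circle inscribed in the sector
  set m : ℝ := 1 + 3 * k with hmdef
  have hm : 0 < m := by simp only [hmdef]; linarith
  set c : ℝ := 4 * t / m with hcdef
  set ρ : ℝ := 4 * t * s / m with hρdef
  set d : ℝ := 3 * t * (1 - k) / m with hddef
  have hρ0 : 0 < ρ := by rw [hρdef]; positivity
  have hd0 : 0 < d := by rw [hddef]; have : 0 < 1 - k := by linarith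
                         positivity
  have hct : c - d = t := by rw [hcdef, hddef]; field_simp; ring
  have hdρ : d < ρ := by
    rw [hddef, hρdef]
    rw [div_lt_div_iff₀ hm hm]
    have h9 : 3 * (1 - k) < 4 * s := by
      nlinarith [hs2, hs0, hk0, hk1, mul_pos hs0 hs0]
    nlinarith [mul_lt_mul_of_pos_right (mul_lt_mul_of_pos_left h9 htpos) hm]
  have hP : 0 < ρ ^ 2 - d ^ 2 := by nlinarith [hd0, hdρ]
  -- numerical range condition on the closed disk
  have hball : ∀ z ∈ Metric.closedBall ((c:ℂ)) ρ, ∀ u : H,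
      0 ≤ (inner ℂ u ((z • L) u) : ℂ).re := by
    intro z hz u
    have hdist : (z.re - c) ^ 2 + z.im ^ 2 ≤ ρ ^ 2 := by
      have h0 := Metric.mem_closedBall.mp hz
      rw [Complex.dist_eq_re_im, Complex.ofReal_re, Complex.ofReal_im, sub_zero] at h0
      have h1 : (0:ℝ) ≤ (z.re - c) ^ 2 + z.im ^ 2 := by positivity
      nlinarith [Real.sq_sqrt h1, Real.sqrt_nonneg ((z.re - c) ^ 2 + z.im ^ 2), hρ0]
    have hsc : s * c = ρ := by rw [hcdef, hρdef]; field_simp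
    have hcone : 0 ≤ s * z.re - k * |z.im| := by
      nlinarith [hdist, hsc, hs2, sq_abs z.im, abs_nonneg z.im,
        sq_nonneg (k * (z.re - c) + s * |z.im|), hρ0, hs0, hk0]
    obtain ⟨hre, him⟩ := hsec u
    rw [htan] at him
    set w : ℂ := (inner ℂ u (L u) : ℂ) with hwdef
    have him' : s * |w.im| ≤ k * w.re := by
      have h1 : s * |w.im| ≤ s * (k / s * w.re) :=
        mul_le_mul_of_nonneg_left him hs0.le
      have h2 : s * (k / s * w.re) = k * w.re := by field_simp
      linarith
    rw [ContinuousLinearMap.smul_apply, inner_smul_right, Complex.mul_re]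
    have h5 : z.im * w.im ≤ |z.im| * |w.im| := by
      calc z.im * w.im ≤ |z.im * w.im| := le_abs_self _
        _ = |z.im| * |w.im| := abs_mul _ _
    nlinarith [mul_le_mul_of_nonneg_left him' (abs_nonneg z.im),
      mul_nonneg hre hcone, hs0, h5, abs_nonneg z.im, abs_nonneg w.im]
  -- contraction on the closed disk
  set f : ℂ → (H →L[ℂ] H) := fun z => NormedSpace.exp (z • (-L)) with hfdef
  have hballexp : ∀ z ∈ Metric.closedBall ((c:ℂ)) ρ, ‖f z‖ ≤ 1 := by
    intro z hz
    have h1 := exp_neg_accretive_contraction (z • L) (hball z hz)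
    have h2 : z • (-L) = -(z • L) := smul_neg z L
    rw [hfdef]
    simp only [h2]
    exact h1
  have hfd : ∀ z : ℂ, HasDerivAt f ((-L) * f z) z := fun z =>
    hasDerivAt_exp_smul_const' (-L) z
  -- Möbius rescaled Cauchy estimate
  set a : ℝ := -(d / ρ) with hadef
  have ha1 : |a| < 1 := by
    rw [hadef, abs_neg, abs_div, abs_of_pos hd0, abs_of_pos hρ0, div_lt_one hρ0]
    exact hdρ
  have ha2 : a ^ 2 < 1 := by
    have := abs_lt.mp ha1
    nlinarith [this.1, this.2]
  set T : ℝ := ‖L * f (t:ℂ)‖ with hTdef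
  have key : ∀ r : ℝ, r ∈ Set.Ioo (0:ℝ) 1 → (ρ * (1 - a ^ 2)) * T ≤ 1 / r := by
    intro r hr
    obtain ⟨hr0, hr1⟩ := hr
    set φm : ℂ → ℂ := fun w => (c:ℂ) + (ρ:ℂ) * ((w + a) / (1 + a * w)) with hφmdef
    have hnz : ∀ w : ℂ, ‖w‖ ≤ 1 → (1:ℂ) + a * w ≠ 0 := by
      intro w hw h0
      have h1 : (a:ℂ) * w = -1 := by linear_combination h0
      have h2 : ‖(a:ℂ) * w‖ = 1 := by rw [h1]; simp
      rw [norm_mul] at h2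
      have h3 : ‖(a:ℂ)‖ = |a| := Complex.norm_real a
      have h4 : ‖(a:ℂ)‖ * ‖w‖ ≤ |a| * 1 := by
        rw [h3]; exact mul_le_mul_of_nonneg_left hw (abs_nonneg a)
      rw [h2] at h4
      rw [mul_one] at h4
      linarith
    have hmaps : ∀ w ∈ Metric.closedBall (0:ℂ) r, φm w ∈ Metric.closedBall ((c:ℂ)) ρ := by
      intro w hw
      have hwn : ‖w‖ ≤ r := by simpa using Metric.mem_closedBall.mp hw
      have hwsq : w.re ^ 2 + w.im ^ 2 ≤ r ^ 2 := by
        have h1 : ‖w‖ ^ 2 = w.re ^ 2 + w.im ^ 2 := by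
          rw [Complex.sq_norm, Complex.normSq_apply]; ring
        have h2 : ‖w‖ ≤ r := hwn
        have h3 : ‖w‖ ^ 2 ≤ r ^ 2 :=
          pow_le_pow_left₀ (norm_nonneg w) h2 2
        linarith
      have hq : ‖w + (a:ℂ)‖ ≤ ‖1 + (a:ℂ) * w‖ := by
        have e1 : ‖w + (a:ℂ)‖ ^ 2 = (w.re + a) ^ 2 + w.im ^ 2 := by
          rw [Complex.sq_norm, Complex.normSq_apply]
          simp [Complex.add_re, Complex.add_im, Complex.ofReal_re, Complex.ofReal_im]
          ring
        have e2 : ‖1 + (a:ℂ) * w‖ ^ 2 = (1 + a * w.re) ^ 2 + (a * w.im) ^ 2 := by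
          rw [Complex.sq_norm, Complex.normSq_apply]
          simp [Complex.add_re, Complex.add_im, Complex.mul_re, Complex.mul_im,
            Complex.ofReal_re, Complex.ofReal_im]
          ring
        have e3 : ‖w + (a:ℂ)‖ ^ 2 ≤ ‖1 + (a:ℂ) * w‖ ^ 2 := by
          rw [e1, e2]
          exact mobius_aux ha2 hr1 hr0 hwsq
        exact le_of_pow_le_pow_left₀ two_ne_zero (norm_nonneg _) e3
      rw [Metric.mem_closedBall]
      have : φm w - (c:ℂ) = (ρ:ℂ) * ((w + a) / (1 + a * w)) := by rw [hφmdef]; ring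
      rw [dist_eq_norm, this, norm_mul, norm_div]
      have hρn : ‖(ρ:ℂ)‖ = ρ := by rw [Complex.norm_real]; exact abs_of_pos hρ0
      rw [hρn]
      have h0 : (1:ℂ) + (a:ℂ) * w ≠ 0 := hnz w (by linarith)
      have h0' : 0 < ‖1 + (a:ℂ) * w‖ := norm_pos_iff.mpr h0
      calc ρ * (‖w + (a:ℂ)‖ / ‖1 + (a:ℂ) * w‖) ≤ ρ * 1 := by
            apply mul_le_mul_of_nonneg_left _ hρ0.le
            rw [div_le_one h0']
            exact hq
        _ = ρ := mul_one ρ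
    have hφmd : ∀ w ∈ Metric.closedBall (0:ℂ) r, DifferentiableAt ℂ φm w := by
      intro w hw
      have hwn : ‖w‖ ≤ r := by simpa using Metric.mem_closedBall.mp hw
      apply DifferentiableAt.const_add
      apply DifferentiableAt.const_mul
      exact DifferentiableAt.div (by fun_prop) (by fun_prop) (hnz w (by linarith))
    set g : ℂ → (H →L[ℂ] H) := fun w => f (φm w) with hgdef
    have hgd : DifferentiableOn ℂ g (Metric.closedBall 0 r) := by
      intro w hw
      exact (((hfd (φm w)).differentiableAt.comp w (hφmd w hw))).differentiableWithinAt
    have hgb : ∀ w ∈ Metric.closedBall (0:ℂ) r, ‖g w‖ ≤ 1 := fun w hw =>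
      hballexp (φm w) (hmaps w hw)
    have hcauchy := norm_deriv_le_of_bound g hr0 hgd hgb
    -- compute deriv g 0
    have hφm0 : φm 0 = (t:ℂ) := by
      rw [hφmdef]
      simp only [zero_add, mul_zero, add_zero, div_one]
      have hra : c + ρ * a = t := by
        have h1 : ρ * -(d / ρ) = -d := by
          field_simp
        rw [hadef, h1]
        linarith [hct]
      calc (↑c:ℂ) + ↑ρ * ↑a = ((c + ρ * a : ℝ) : ℂ) := by push_cast; ring
        _ = (t:ℂ) := by rw [hra]
    have hφmderiv : HasDerivAt φm ((ρ:ℂ) * (1 - (a:ℂ) ^ 2)) 0 := by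
      have h1 : HasDerivAt (fun w : ℂ => w + (a:ℂ)) 1 0 :=
        (hasDerivAt_id 0).add_const _
      have h2 : HasDerivAt (fun w : ℂ => 1 + (a:ℂ) * w) (a:ℂ) 0 := by
        simpa using ((hasDerivAt_id 0).const_mul (a:ℂ)).const_add 1
      have h0 : (1:ℂ) + (a:ℂ) * 0 ≠ 0 := by simp
      have h3 := (h1.div h2 h0)
      have h4 : (1 * (1 + (a:ℂ) * 0) - (0 + (a:ℂ)) * (a:ℂ)) / (1 + (a:ℂ) * 0) ^ 2
          = 1 - (a:ℂ) ^ 2 := by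
        simp
        ring
      rw [h4] at h3
      exact ((h3.const_mul (ρ:ℂ)).const_add (c:ℂ))
    have hg0 : HasDerivAt g (((ρ:ℂ) * (1 - (a:ℂ) ^ 2)) • ((-L) * f (φm 0))) 0 :=
      (hfd (φm 0)).scomp 0 hφmderiv
    have hg0' : deriv g 0 = ((ρ:ℂ) * (1 - (a:ℂ) ^ 2)) • ((-L) * f ((t:ℂ))) := by
      rw [← hφm0]
      exact hg0.deriv
    rw [hg0'] at hcauchy
    have hnorm : ‖((ρ:ℂ) * (1 - (a:ℂ) ^ 2)) • ((-L) * f ((t:ℂ)))‖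
        = (ρ * (1 - a ^ 2)) * T := by
      rw [norm_smul, norm_mul]
      have e1 : ‖(ρ:ℂ)‖ = ρ := by rw [Complex.norm_real]; exact abs_of_pos hρ0
      have e2 : ‖(1:ℂ) - (a:ℂ) ^ 2‖ = 1 - a ^ 2 := by
        have : (1:ℂ) - (a:ℂ) ^ 2 = ((1 - a ^ 2 : ℝ) : ℂ) := by push_cast; ring
        rw [this, Complex.norm_real]
        exact abs_of_pos (by linarith)
      have e3 : ‖(-L) * f ((t:ℂ))‖ = T := by
        rw [hTdef, neg_mul, norm_neg]
      rw [e1, e2, e3]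
    rw [hnorm] at hcauchy
    simpa using hcauchy
  -- pass to the limit r → 1
  have hF : (ρ * (1 - a ^ 2)) * T ≤ 1 := by
    apply le_of_forall_gt_imp_ge_of_dense
    intro y hy
    have hy0 : 0 < y := lt_trans zero_lt_one hy
    have h1 := key (1 / y) ⟨by positivity, by rw [div_lt_one hy0]; linarith⟩
    rwa [one_div_one_div] at h1
  -- conclude
  have hprod : 0 < ρ * (1 - a ^ 2) := by
    apply mul_pos hρ0
    linarith
  have hT0 : 0 ≤ T := norm_nonneg _
  have hTle : T ≤ 1 / (ρ * (1 - a ^ 2)) := by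
    rw [le_div_iff₀ hprod]
    linarith [hF]
  have hρa : ρ * (1 - a ^ 2) = (ρ ^ 2 - d ^ 2) / ρ := by
    rw [hadef]
    field_simp
  -- the polynomial inequality
  have hmain : 2 * Real.pi * s * (1 + 3 * k) ≤ 7 + 25 * k :=
    sector_poly_aux hk0 hk1 hs0 hs2 hπ Real.pi_lt_d2
  -- final comparison
  have hcross : t * ρ * (Real.pi * (1 - k)) ≤ 2 * (ρ ^ 2 - d ^ 2) := by
    have hb1 : 4 * Real.pi * s * (1 - k) * m ≤ 2 * (1 - k) * (7 + 25 * k) := by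
      have h2 := mul_le_mul_of_nonneg_left hmain (by linarith : (0:ℝ) ≤ 2 * (1 - k))
      calc 4 * Real.pi * s * (1 - k) * m = 2 * (1 - k) * (2 * Real.pi * s * (1 + 3 * k)) := by
            rw [hmdef]; ring
        _ ≤ 2 * (1 - k) * (7 + 25 * k) := h2
    have hb2 : 32 * s ^ 2 - 18 * (1 - k) ^ 2 = 2 * (1 - k) * (7 + 25 * k) := by
      rw [hs2]; ring
    have hbr : 4 * Real.pi * s * (1 - k) * m ≤ 32 * s ^ 2 - 18 * (1 - k) ^ 2 := by
      rw [hb2]; exact hb1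
    have e1 : ρ * m = 4 * t * s := by rw [hρdef]; field_simp
    have e2 : d * m = 3 * t * (1 - k) := by rw [hddef]; field_simp
    exact sector_scale_aux e1 e2 hbr hm
  -- rewrite the goal
  have hgoal : (t • L) * NormedSpace.exp (-(t • L)) = (t:ℂ) • (L * f ((t:ℂ))) := by
    have h1 : f ((t:ℂ)) = NormedSpace.exp (-(t • L)) := by
      show NormedSpace.exp (((t:ℝ):ℂ) • -L) = NormedSpace.exp (-(t • L))
      rw [smul_neg, Complex.coe_smul]
    rw [h1, ← smul_mul_assoc, Complex.coe_smul]
  rw [hgoal, norm_smul]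
  have h2 : ‖((t:ℝ):ℂ)‖ = t := by rw [Complex.norm_real]; exact abs_of_pos htpos
  rw [h2, ← hTdef]
  have h1k : (0:ℝ) < 1 - k := by linarith
  have hpk : 0 < Real.pi * (1 - k) := by positivity
  have hF2 : (ρ ^ 2 - d ^ 2) * T ≤ ρ := by
    have h3 := hF
    rw [hρa, div_mul_eq_mul_div, div_le_one hρ0] at h3
    linarith
  have hTle' : T ≤ ρ / (ρ ^ 2 - d ^ 2) := by
    rw [le_div_iff₀ hP]
    linarith
  have step1 : t * T ≤ t * (ρ / (ρ ^ 2 - d ^ 2)) :=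
    mul_le_mul_of_nonneg_left hTle' htpos.le
  have step3 : t * (ρ / (ρ ^ 2 - d ^ 2)) ≤ 2 / (Real.pi * (1 - k)) := by
    rw [mul_div_assoc']
    rw [div_le_div_iff₀ hP hpk]
    linarith [hcross]
  have heq : 1 / (Real.pi * Real.sin α ^ 2) = 2 / (Real.pi * (1 - k)) := by
    rw [hsin2, div_eq_div_iff (by positivity : (0:ℝ) < Real.pi * ((1 - k) / 2)).ne' hpk.ne']
    ring
  rw [heq]
  linarith
end

section
/- Let λ > 0 and a ∈ ℝ with a² > (1 − λ)²/(4λ), and set S = diag(1, λ), J = [[0, a], [−a, 0]] as 2×2 real matrices. Then for every t ≥ 0, the operator norm of the matrix exponential satisfies ‖exp(−t·(I + J)·S)‖ ≤ 2·(λ + 1)·|a| / √(4λa² − (1 − λ)²) · exp(−((1 + λ)/2)·t). -/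
open Matrix
open scoped Matrix.Norms.L2Operator

set_option maxHeartbeats 1000000 in
private lemma frob2 (M : Matrix (Fin 2) (Fin 2) ℝ) :
    ‖M‖ ≤ Real.sqrt ((M 0 0)^2 + (M 0 1)^2 + (M 1 0)^2 + (M 1 1)^2) := by
  rw [Matrix.l2_opNorm_def]
  refine ContinuousLinearMap.opNorm_le_bound _ (Real.sqrt_nonneg _) (fun x => ?_)
  have hx : ‖x‖ = Real.sqrt ((x 0)^2 + (x 1)^2) := by
    rw [EuclideanSpace.norm_eq]
    simp [Fin.sum_univ_two, sq_abs]
  have hMx : ‖((Matrix.toEuclideanLin ≪≫ₗ LinearMap.toContinuousLinearMap) M) x‖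
      = Real.sqrt ((M 0 0 * x 0 + M 0 1 * x 1)^2 + (M 1 0 * x 0 + M 1 1 * x 1)^2) := by
    simp only [LinearEquiv.trans_apply, LinearMap.coe_toContinuousLinearMap']
    rw [EuclideanSpace.norm_eq]
    simp [Matrix.toEuclideanLin_apply, Matrix.mulVec, dotProduct,
      Fin.sum_univ_two, sq_abs]
  rw [hx, hMx, ← Real.sqrt_mul (by positivity)]
  apply Real.sqrt_le_sqrt
  nlinarith [sq_nonneg (M 0 0 * x 1 - M 0 1 * x 0), sq_nonneg (M 1 0 * x 1 - M 1 1 * x 0),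
    sq_nonneg (x 0), sq_nonneg (x 1)]

private lemma frob2' (a b c d : ℝ) :
    ‖!![a, b; c, d]‖ ≤ Real.sqrt (a^2 + b^2 + c^2 + d^2) := by
  simpa using frob2 !![a, b; c, d]

set_option maxHeartbeats 1600000 in
/-- For `S = diag(1, λ)`, `J = [[0,a],[-a,0]]` with
`a² > (1-λ)²/(4λ)`, the matrix exponential satisfies, for all `t ≥ 0`,
`‖exp(-t(I+J)S)‖ ≤ 2(λ+1)|a|/√(4λa² - (1-λ)²) · e^{-((1+λ)/2)t}`. -/
theorem two_dim_semigroup_bound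
    (lam a : ℝ) (hlam : 0 < lam) (ha : (1 - lam) ^ 2 / (4 * lam) < a ^ 2) :
    ∀ t : ℝ, 0 ≤ t →
      ‖NormedSpace.exp
          (-(t • ((1 + !![(0 : ℝ), a; -a, 0]) * !![(1 : ℝ), 0; 0, lam])))‖ ≤
        2 * (lam + 1) * |a| / Real.sqrt (4 * lam * a ^ 2 - (1 - lam) ^ 2) *
          Real.exp (-((1 + lam) / 2) * t) := by
  intro t ht
  have hd : 0 < lam * a ^ 2 - (1 - lam) ^ 2 / 4 := by
    have h1 : (1 - lam) ^ 2 < a ^ 2 * (4 * lam) := (div_lt_iff₀ (by positivity)).mp ha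
    nlinarith
  set ω : ℝ := Real.sqrt (lam * a ^ 2 - (1 - lam) ^ 2 / 4) with hωdef
  have hω : 0 < ω := Real.sqrt_pos.mpr hd
  have hω2 : ω ^ 2 = lam * a ^ 2 - (1 - lam) ^ 2 / 4 := Real.sq_sqrt hd.le
  set B : Matrix (Fin 2) (Fin 2) ℝ := !![(1 - lam)/2, a * lam; -a, (lam - 1)/2] with hB
  set K : Matrix (Fin 2) (Fin 2) ℝ := ω⁻¹ • B with hKdef
  have hK : K * K = -1 := by
    have hBB : B * B = (-(ω ^ 2)) • (1 : Matrix (Fin 2) (Fin 2) ℝ) := by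
      ext i j
      fin_cases i <;> fin_cases j <;>
        simp [hB, Matrix.mul_apply, Fin.sum_univ_two, Matrix.one_apply, hω2] <;> ring
    rw [hKdef, smul_mul_smul, hBB, smul_smul]
    rw [show ω⁻¹ * ω⁻¹ * -(ω ^ 2) = -1 by field_simp]
    simp
  set c : ℝ := -((1 + lam) / 2) * t with hc
  set z : ℂ := (c : ℂ) + (-(t * ω)) * Complex.I with hz
  have hzre : z.re = c := by simp [hz]
  have hzim : z.im = -(t * ω) := by simp [hz]
  have hφz : Complex.liftAux K hK z
      = -(t • ((1 + !![(0 : ℝ), a; -a, 0]) * !![(1 : ℝ), 0; 0, lam])) := by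
    rw [Complex.liftAux_apply, hzre, hzim]
    ext i j
    fin_cases i <;> fin_cases j <;>
      simp [hKdef, hB, Matrix.algebraMap_matrix_apply, Matrix.mul_apply, Fin.sum_univ_two,
        Matrix.one_apply, hc] <;> field_simp <;> ring
  set e : ℝ := Real.exp c with he
  set co : ℝ := Real.cos (t * ω) with hco
  set si : ℝ := Real.sin (t * ω) with hsi
  have hexp : NormedSpace.exp
      (-(t • ((1 + !![(0 : ℝ), a; -a, 0]) * !![(1 : ℝ), 0; 0, lam])))
      = !![e * co - e * si * (ω⁻¹ * ((1 - lam)/2)), -(e * si) * (ω⁻¹ * (a * lam));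
           -(e * si) * (ω⁻¹ * (-a)), e * co - e * si * (ω⁻¹ * ((lam - 1)/2))] := by
    rw [← hφz, ← NormedSpace.map_exp (Complex.liftAux K hK)
      (Complex.liftAux K hK).toLinearMap.continuous_of_finiteDimensional z,
      show NormedSpace.exp z = Complex.exp z by
        rw [Complex.exp_eq_exp_ℂ]]
    rw [Complex.liftAux_apply, Complex.exp_re, Complex.exp_im, hzre, hzim]
    ext i j
    fin_cases i <;> fin_cases j <;>
      simp [hKdef, hB, Matrix.algebraMap_matrix_apply, Matrix.one_apply, Matrix.mul_apply,
        Fin.sum_univ_two, Real.cos_neg, Real.sin_neg, he, hco, hsi] <;> ring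
  rw [hexp]
  have hsqrt : Real.sqrt (4 * lam * a ^ 2 - (1 - lam) ^ 2) = 2 * ω := by
    rw [show 4 * lam * a ^ 2 - (1 - lam) ^ 2 = (2 * ω)^2 by rw [mul_pow]; nlinarith [hω2],
      Real.sqrt_sq (by positivity)]
  rw [hsqrt]
  have hR : (0:ℝ) ≤ 2 * (lam + 1) * |a| / (2 * ω) * e := by
    apply mul_nonneg _ (Real.exp_pos c).le
    apply div_nonneg _ (by positivity)
    have := abs_nonneg a
    nlinarith
  refine le_trans (frob2' _ _ _ _) ?_
  rw [← Real.sqrt_sq hR]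
  apply Real.sqrt_le_sqrt
  have hRS : (2 * (lam + 1) * |a| / (2 * ω) * e)^2
      = (lam + 1)^2 * a^2 * e^2 / ω^2 := by
    rw [mul_pow, div_pow, mul_pow, mul_pow, sq_abs]
    field_simp
  rw [hRS]
  have hpyth : si^2 + co^2 = 1 := Real.sin_sq_add_cos_sq (t * ω)
  have hq : (lam + 1)^2 * a^2 * e^2
      - (2 * (e * co)^2 * ω^2 + (e * si)^2 * ((1 - lam)^2/2 + a^2 * lam^2 + a^2))
      = ((1 - lam)^2/2 + a^2 * lam^2 + a^2) * (e * co)^2 + 2 * ω^2 * (e * si)^2 := by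
    linear_combination (-(e^2) * ((1 - lam)^2/2 + a^2 * lam^2 + a^2) - 2 * e^2 * ω^2) * hpyth
      + (-2 * e^2) * hω2
  have hkey : 2 * (e * co)^2 * ω^2
      + (e * si)^2 * ((1 - lam)^2/2 + a^2 * lam^2 + a^2)
      ≤ (lam + 1)^2 * a^2 * e^2 := by
    have h1 : (0:ℝ) ≤ ((1 - lam)^2/2 + a^2 * lam^2 + a^2) * (e * co)^2 := by positivity
    have h2 : (0:ℝ) ≤ 2 * ω^2 * (e * si)^2 := by positivity
    linarith
  have hS_eq : (e * co - e * si * (ω⁻¹ * ((1 - lam)/2)))^2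
      + (-(e * si) * (ω⁻¹ * (a * lam)))^2
      + (-(e * si) * (ω⁻¹ * (-a)))^2
      + (e * co - e * si * (ω⁻¹ * ((lam - 1)/2)))^2
      = (2 * (e * co)^2 * ω^2
        + (e * si)^2 * ((1 - lam)^2/2 + a^2 * lam^2 + a^2)) / ω^2 := by
    field_simp
    ring
  rw [hS_eq]
  gcongr
end
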